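/- arXiv:1605.07102 — 7 statements merged into one kernel-verified Lean document; each statement's English description precedes it below -/
import Mathlib

section
/- If $z$ is a nonzero complex number with $|z| \neq \rho^\rho (1-\rho)^{1-\rho}$ where $\rho = N/L$, then every root of the polynomial $q_z(w) = w^N(w+1)^{L-N} - z^L$ is simple. -/
/-- If `z ≠ 0` and `|z| ≠ ρ^ρ (1-ρ)^(1-ρ)` with `ρ = N/L`, every root of
`q_z(w) = w^N (w+1)^(L-N) - z^L` is simple. -/
theorem qz_roots_simple (L N : ℕ) (hN : 0 < N) (hNL : N < L) (z : ℂ) (hz : z ≠ 0)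
    (habs : ‖z‖ ≠
      ((N : ℝ) / L) ^ ((N : ℝ) / L) * (1 - (N : ℝ) / L) ^ (1 - (N : ℝ) / L))
    (w : ℂ) (hw : w ^ N * (w + 1) ^ (L - N) - z ^ L = 0) :
    deriv (fun w : ℂ => w ^ N * (w + 1) ^ (L - N) - z ^ L) w ≠ 0 := by
  have hL : 0 < L := hN.trans hNL
  have hLR : (0:ℝ) < L := by exact_mod_cast hL
  have hwz : w ^ N * (w + 1) ^ (L - N) = z ^ L := by linear_combination hw
  have hzL : z ^ L ≠ 0 := pow_ne_zero _ hz
  have hw0 : w ≠ 0 := by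
    intro h; apply hzL; rw [← hwz, h, zero_pow hN.ne', zero_mul]
  have hw1 : w + 1 ≠ 0 := by
    intro h; apply hzL; rw [← hwz, h, zero_pow (by omega : L - N ≠ 0), mul_zero]
  have hd : HasDerivAt (fun w : ℂ => w ^ N * (w + 1) ^ (L - N) - z ^ L)
      (((N:ℂ) * w ^ (N-1)) * (w+1)^(L-N) + w ^ N * ((L-N:ℕ) * (w+1)^(L-N-1) * 1)) w :=
    ((hasDerivAt_pow N w).mul
      (((hasDerivAt_id w).add_const 1).pow (L-N))).sub_const _
  rw [hd.deriv]
  intro h0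
  have e1 : w ^ N = w * w ^ (N-1) := by
    rw [← pow_succ']; congr 1; omega
  have e2 : (w+1) ^ (L-N) = (w+1) * (w+1) ^ (L-N-1) := by
    rw [← pow_succ']; congr 1; omega
  have hcast : ((L-N:ℕ):ℂ) = (L:ℂ) - N := by
    push_cast [Nat.cast_sub hNL.le]; ring
  rw [e1, e2, hcast] at h0
  have hfac : (w ^ (N-1) * (w+1)^(L-N-1)) * ((L:ℂ) * w + N) = 0 := by
    linear_combination h0
  have hwN : w ^ (N-1) ≠ 0 := pow_ne_zero _ hw0
  have hwN1 : (w+1) ^ (L-N-1) ≠ 0 := pow_ne_zero _ hw1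
  have hlin : (L:ℂ) * w + N = 0 := by
    rcases mul_eq_zero.mp hfac with h | h
    · exact absurd h (mul_ne_zero hwN hwN1)
    · exact h
  have hLC : (L:ℂ) ≠ 0 := by exact_mod_cast hL.ne'
  have hwval : w = -((N:ℂ) / L) := by
    field_simp at hlin ⊢
    linear_combination hlin
  -- now compute the absolute value of z
  set ρ : ℝ := (N:ℝ)/L with hρ
  have hρ0 : 0 < ρ := by positivity
  have hρ1 : ρ < 1 := by
    rw [hρ, div_lt_one hLR]; exact_mod_cast hNL
  have habsw : ‖w‖ = ρ := by
    rw [hwval, norm_neg, norm_div, Complex.norm_natCast, Complex.norm_natCast]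
  have habsw1 : ‖w+1‖ = 1 - ρ := by
    have : w + 1 = ((1 - ρ : ℝ) : ℂ) := by
      rw [hwval, hρ]; push_cast; field_simp; ring
    rw [this, Complex.norm_real, Real.norm_eq_abs, abs_of_pos (by linarith)]
  have hpow : ‖z‖ ^ L = ρ ^ N * (1-ρ) ^ (L-N) := by
    rw [← norm_pow, ← hwz, norm_mul, norm_pow, norm_pow, habsw, habsw1]
  have hr0 : (0:ℝ) ≤ ρ ^ ρ * (1-ρ) ^ (1-ρ) :=
    mul_nonneg (Real.rpow_nonneg hρ0.le _) (Real.rpow_nonneg (by linarith) _)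
  have hrpow : (ρ ^ ρ * (1-ρ) ^ (1-ρ)) ^ L = ρ ^ N * (1-ρ) ^ (L-N) := by
    rw [mul_pow]
    congr 1
    · rw [← Real.rpow_natCast (ρ ^ ρ) L, ← Real.rpow_mul hρ0.le,
        ← Real.rpow_natCast ρ N]
      congr 1
      rw [hρ]; field_simp
    · rw [← Real.rpow_natCast ((1-ρ) ^ (1-ρ)) L, ← Real.rpow_mul (by linarith),
        ← Real.rpow_natCast (1-ρ) (L-N)]
      congr 1
      rw [hρ, Nat.cast_sub hNL.le]; field_simp
  apply habs
  have h2 : ‖z‖ ^ L = (ρ ^ ρ * (1-ρ) ^ (1-ρ)) ^ L := by rw [hpow, hrpow]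
  exact (pow_left_inj₀ (norm_nonneg z) hr0 hL.ne').mp h2
end

section
/- For every complex number $s$ with $\Re(s) > 0$ and every real $c$ with $0 < c < \Re(s)$, one has $\frac{1}{\sqrt{2\pi}} e^{s^2/2} \int_{-\infty}^{-s} e^{-x^2/2}\, dx = \frac{1}{2\pi i}\int_{\Re(\eta) = c} \frac{e^{\eta^2/2}}{s - \eta}\, d\eta$, where the integral on the left is along a path from $-\infty$ to $-s$ (e.g. $(-\infty, -\Re(s)] \cup [-\Re(s), -s]$) and the integral on the right is along the vertical line $\Re(\eta) = c$ oriented from $c - i\infty$ to $c + i\infty$. -/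
open MeasureTheory Set Complex Filter
set_option maxHeartbeats 1000000

lemma norm_gauss_shift (t : ℝ) (z : ℂ) :
    ‖Complex.exp (-((t:ℂ)+z)^2/2)‖ = Real.exp (-(t+z.re)^2/2 + z.im^2/2) := by
  rw [Complex.norm_exp]; congr 1
  simp [div_eq_mul_inv, pow_two, Complex.mul_re, Complex.mul_im, Complex.add_re, Complex.add_im,
    Complex.inv_re, Complex.inv_im, Complex.normSq]
  ring

/-- `g(z) = ∫_0^∞ e^{-(t+z)²/2} dt`. -/
noncomputable def gI (z : ℂ) : ℂ := ∫ t in Ioi (0:ℝ), Complex.exp (-((t:ℂ)+z)^2/2)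

lemma integrableOn_gauss_shift (z : ℂ) (hz : 0 ≤ z.re) :
    IntegrableOn (fun t : ℝ => Complex.exp (-((t:ℂ)+z)^2/2)) (Ioi 0) := by
  have hmeas : AEStronglyMeasurable (fun t : ℝ => Complex.exp (-((t:ℂ)+z)^2/2))
      (volume.restrict (Ioi 0)) := by
    apply Continuous.aestronglyMeasurable; continuity
  have hint : Integrable (fun t : ℝ => Real.exp (z.im^2/2) * Real.exp (-(1/2) * t^2)) :=
    (integrable_exp_neg_mul_sq (by norm_num)).const_mul _
  refine (hint.integrableOn).mono' hmeas ?_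
  rw [ae_restrict_iff' measurableSet_Ioi]
  filter_upwards with t ht
  rw [norm_gauss_shift, ← Real.exp_add]
  apply Real.exp_le_exp.mpr
  have h1 : t^2 ≤ (t + z.re)^2 := by nlinarith [le_of_lt (show (0:ℝ) < t from ht)]
  nlinarith

lemma hasDerivAt_gauss (c z : ℂ) :
    HasDerivAt (fun w : ℂ => Complex.exp (-(c + w)^2/2))
      (-(c + z) * Complex.exp (-(c + z)^2/2)) z := by
  have h1 : HasDerivAt (fun w : ℂ => -(c + w)^2/2) (-(c + z)) z := by
    have := (((hasDerivAt_id z).const_add c).pow 2).neg.div_const 2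
    refine this.congr_deriv ?_
    simp
    ring
  simpa [mul_comm] using h1.cexp

lemma tendsto_gauss_shift (z : ℂ) :
    Tendsto (fun t : ℝ => Complex.exp (-((t:ℂ)+z)^2/2)) atTop (nhds 0) := by
  rw [tendsto_zero_iff_norm_tendsto_zero]
  simp_rw [norm_gauss_shift]
  apply Real.tendsto_exp_atBot.comp
  apply Filter.tendsto_atBot_add_const_right
  have h1 : Tendsto (fun t : ℝ => (-(1:ℝ)/2) * (t + z.re)^2) atTop atBot :=
    ((tendsto_pow_atTop two_ne_zero).comp
      (tendsto_atTop_add_const_right atTop z.re tendsto_id)).const_mul_atTop_of_neg (by norm_num)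
  convert h1 using 2 with t
  ring

lemma integrable_linear_gauss (M K : ℝ) :
    Integrable (fun t : ℝ => (t + M) * K * Real.exp (-(1/2) * t^2)) := by
  have h1 := integrable_mul_exp_neg_mul_sq (by norm_num : (0:ℝ) < 1/2)
  have h2 := integrable_exp_neg_mul_sq (by norm_num : (0:ℝ) < 1/2)
  have := (h1.const_mul K).add (h2.const_mul (M * K))
  refine (congrArg (Integrable · volume) ?_).mpr this
  funext t
  simp only [Pi.add_apply]
  ring

lemma bound_deriv (t : ℝ) (ht : 0 ≤ t) (x : ℂ) (hx : 0 ≤ x.re) (M : ℝ) (hM : ‖x‖ ≤ M) :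
    ‖-((t:ℂ)+x) * Complex.exp (-((t:ℂ)+x)^2/2)‖
      ≤ (t + M) * Real.exp (M^2/2) * Real.exp (-(1/2)*t^2) := by
  rw [norm_mul, norm_neg, norm_gauss_shift]
  have h1 : ‖(t:ℂ)+x‖ ≤ t + M := by
    refine (norm_add_le _ _).trans ?_
    rw [Complex.norm_real, Real.norm_eq_abs, _root_.abs_of_nonneg ht]
    linarith
  have him : |x.im| ≤ M := by
    have := Complex.abs_im_le_norm x
    linarith
  have h2 : Real.exp (-(t+x.re)^2/2 + x.im^2/2) ≤ Real.exp (M^2/2) * Real.exp (-(1/2)*t^2) := by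
    rw [← Real.exp_add]
    apply Real.exp_le_exp.mpr
    have h3 : x.im^2 ≤ M^2 := by nlinarith [abs_nonneg x.im, _root_.sq_abs x.im]
    nlinarith
  calc ‖(t:ℂ)+x‖ * Real.exp (-(t+x.re)^2/2 + x.im^2/2)
      ≤ (t + M) * (Real.exp (M^2/2) * Real.exp (-(1/2)*t^2)) := by
        apply mul_le_mul h1 h2 (Real.exp_pos _).le (by nlinarith [norm_nonneg x])
    _ = _ := by ring

lemma hasDerivAt_gI {z : ℂ} (hz : 0 < z.re) :
    HasDerivAt gI (-Complex.exp (-z^2/2)) z := by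
  set ε := z.re/2 with hε
  set M := ‖z‖ + z.re/2 with hM
  have hball : ∀ x ∈ Metric.ball z ε, 0 ≤ x.re ∧ ‖x‖ ≤ M := by
    intro x hx
    rw [Metric.mem_ball, dist_eq_norm] at hx
    have h0 : ‖x - z‖ ≤ ε := hx.le
    constructor
    · have := Complex.abs_re_le_norm (x - z)
      rw [Complex.sub_re] at this
      have := abs_le.mp this
      rw [hε] at h0
      linarith [this.1]
    · have h1 : ‖x‖ ≤ ‖z‖ + ‖x - z‖ := norm_le_norm_add_norm_sub' x z
      rw [hε] at h0
      rw [hM]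
      linarith
  have key := hasDerivAt_integral_of_dominated_loc_of_deriv_le
    (F := fun (x : ℂ) (t : ℝ) => Complex.exp (-((t:ℂ)+x)^2/2))
    (F' := fun (x : ℂ) (t : ℝ) => -((t:ℂ)+x) * Complex.exp (-((t:ℂ)+x)^2/2))
    (x₀ := z) (μ := volume.restrict (Ioi 0))
    (bound := fun t => (t + M) * Real.exp (M^2/2) * Real.exp (-(1/2)*t^2))
    (s := Metric.ball z ε) (Metric.ball_mem_nhds z (by positivity))
    (Filter.Eventually.of_forall fun x => (Continuous.aestronglyMeasurable (by continuity)))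
    (integrableOn_gauss_shift z hz.le)
    (Continuous.aestronglyMeasurable (by continuity))
    ?_ ((integrable_linear_gauss M (Real.exp (M^2/2))).integrableOn) ?_
  · obtain ⟨hint, hderiv⟩ := key
    have heval : (∫ t in Ioi (0:ℝ), -((t:ℂ)+z) * Complex.exp (-((t:ℂ)+z)^2/2))
        = -Complex.exp (-z^2/2) := by
      have hd : ∀ x ∈ Ioi (0:ℝ), HasDerivAt (fun t : ℝ => Complex.exp (-((t:ℂ)+z)^2/2))
          (-((x:ℂ)+z) * Complex.exp (-((x:ℂ)+z)^2/2)) x := by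
        intro x _
        have := (hasDerivAt_gauss z (x:ℂ)).comp_ofReal
        simpa [add_comm] using this
      have := integral_Ioi_of_hasDerivAt_of_tendsto
        (Continuous.continuousWithinAt (by continuity)) hd hint (tendsto_gauss_shift z)
      simpa using this
    rw [heval] at hderiv
    exact hderiv
  · rw [ae_restrict_iff' measurableSet_Ioi]
    filter_upwards with t ht
    intro x hx
    exact bound_deriv t (le_of_lt ht) x (hball x hx).1 M (hball x hx).2
  · filter_upwards with t
    intro x _
    simpa [add_comm] using hasDerivAt_gauss (t:ℂ) x

/-- `∫_0^∞ e^{-tz} dt = z⁻¹` for `Re z > 0`. -/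
lemma integral_cexp_neg_mul_Ioi {z : ℂ} (hz : 0 < z.re) :
    ∫ t in Ioi (0:ℝ), Complex.exp (-(t:ℂ) * z) = z⁻¹ := by
  have hz' : z ≠ 0 := fun h => by simp [h] at hz
  have hd : ∀ x ∈ Ioi (0:ℝ), HasDerivAt (fun t : ℝ => -z⁻¹ * Complex.exp (-(t:ℂ) * z))
      (Complex.exp (-(x:ℂ) * z)) x := by
    intro x _
    have h1 : HasDerivAt (fun w : ℂ => -z⁻¹ * Complex.exp (-w * z))
        (Complex.exp (-(x:ℂ) * z)) (x:ℂ) := by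
      have h2 : HasDerivAt (fun w : ℂ => -w * z) (-z) (x:ℂ) := by
        simpa using ((hasDerivAt_id ((x:ℂ))).neg.mul_const z)
      have h3 := (h2.cexp).const_mul (-z⁻¹)
      refine h3.congr_deriv ?_
      field_simp
    exact h1.comp_ofReal
  have hint : IntegrableOn (fun t : ℝ => Complex.exp (-(t:ℂ) * z)) (Ioi 0) := by
    have hmeas : AEStronglyMeasurable (fun t : ℝ => Complex.exp (-(t:ℂ) * z))
        (volume.restrict (Ioi 0)) := Continuous.aestronglyMeasurable (by continuity)
    have hbase : IntegrableOn (fun x : ℝ => Real.exp (-z.re * x)) (Ioi 0) :=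
      exp_neg_integrableOn_Ioi 0 hz
    refine hbase.mono' hmeas ?_
    filter_upwards with t
    rw [Complex.norm_exp]
    simp [mul_comm]
  have htend : Tendsto (fun t : ℝ => -z⁻¹ * Complex.exp (-(t:ℂ) * z)) atTop (nhds 0) := by
    rw [show (0:ℂ) = -z⁻¹ * 0 by ring]
    refine Tendsto.const_mul _ (tendsto_zero_iff_norm_tendsto_zero.mpr ?_)
    have hn : ∀ t : ℝ, ‖Complex.exp (-(t:ℂ) * z)‖ = Real.exp (-z.re * t) := by
      intro t
      rw [Complex.norm_exp]
      congr 1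
      simp
      ring
    simp_rw [hn]
    exact Real.tendsto_exp_atBot.comp (tendsto_id.const_mul_atTop_of_neg (by linarith))
  have hres := integral_Ioi_of_hasDerivAt_of_tendsto
    (Continuous.continuousWithinAt (by continuity)) hd hint htend
  rw [hres]
  simp

lemma iic_eq_gI (a : ℝ) :
    (∫ x in Iic (-a : ℝ), Complex.exp (-(x:ℂ)^2/2)) = gI a := by
  have h1 := integral_comp_neg_Ioi a (fun x : ℝ => Complex.exp (-(x:ℂ)^2/2))
  have h2 : (∫ x in Ioi a, Complex.exp (-((-x:ℝ):ℂ)^2/2))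
      = ∫ x in Ioi a, Complex.exp (-(x:ℂ)^2/2) := by
    apply setIntegral_congr_fun measurableSet_Ioi
    intro x _
    push_cast
    ring_nf
  rw [← h1, h2]
  have h3 := (measurePreserving_add_right (volume : Measure ℝ) a).setIntegral_preimage_emb
    (measurableEmbedding_addRight a) (fun x : ℝ => Complex.exp (-(x:ℂ)^2/2)) (Ioi a)
  have h4 : (fun x : ℝ => x + a) ⁻¹' (Ioi a) = Ioi 0 := by
    ext x; simp
  rw [h4] at h3
  rw [← h3]
  unfold gI
  apply setIntegral_congr_fun measurableSet_Ioi
  intro t _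
  push_cast
  ring_nf

lemma segment_eq (s : ℂ) (hs : 0 < s.re) :
    (∫ t in (0:ℝ)..1, (-s - (-(s.re : ℂ))) *
        Complex.exp (-((1 - (t : ℂ)) * (-(s.re : ℂ)) + (t : ℂ) * (-s)) ^ 2 / 2))
      = gI s - gI (s.re : ℂ) := by
  set a : ℂ := (s.re : ℂ) with ha
  have hre : ∀ t : ℝ, (a + (t:ℂ) * (s - a)).re = s.re := by
    intro t
    simp [ha, Complex.add_re, Complex.mul_re, Complex.sub_re, Complex.ofReal_re,
      Complex.sub_im, Complex.ofReal_im]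
  have hp : ∀ t : ℝ, HasDerivAt (fun t : ℝ => a + (t:ℂ) * (s - a)) (s - a) t := by
    intro t
    have : HasDerivAt (fun w : ℂ => a + w * (s - a)) (s - a) (t:ℂ) := by
      simpa using ((hasDerivAt_id ((t:ℂ))).mul_const (s - a)).const_add a
    exact this.comp_ofReal
  have hderiv : ∀ t ∈ uIcc (0:ℝ) 1, HasDerivAt (fun t : ℝ => gI (a + (t:ℂ) * (s - a)))
      ((a - s) * Complex.exp (-(a + (t:ℂ) * (s - a))^2/2)) t := by
    intro t _
    have hg := hasDerivAt_gI (z := a + (t:ℂ) * (s - a)) (by rw [hre]; exact hs)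
    have := HasDerivAt.scomp t hg (hp t)
    refine this.congr_deriv ?_
    simp [smul_eq_mul]
    ring
  have hcont : IntervalIntegrable
      (fun t : ℝ => (a - s) * Complex.exp (-(a + (t:ℂ) * (s - a))^2/2)) volume 0 1 := by
    apply Continuous.intervalIntegrable
    continuity
  have hFTC := intervalIntegral.integral_eq_sub_of_hasDerivAt hderiv hcont
  have heq : (∫ t in (0:ℝ)..1, (-s - (-(s.re : ℂ))) *
        Complex.exp (-((1 - (t : ℂ)) * (-(s.re : ℂ)) + (t : ℂ) * (-s)) ^ 2 / 2))
      = ∫ t in (0:ℝ)..1, (a - s) * Complex.exp (-(a + (t:ℂ) * (s - a))^2/2) := by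
    apply intervalIntegral.integral_congr
    intro t _
    have h5 : ((1 - (t : ℂ)) * (-((s.re:ℝ) : ℂ)) + (t : ℂ) * (-s)) ^ 2
        = (a + (t:ℂ) * (s - a))^2 := by rw [ha]; ring
    simp only [h5]
    congr 1
    rw [ha]
    ring
  rw [heq, hFTC]
  norm_num

lemma rhs_eq (s : ℂ) (c : ℝ) (hc0 : 0 < c) (hc : c < s.re) :
    (∫ y : ℝ, Complex.exp (((c : ℂ) + Complex.I * y) ^ 2 / 2) /
        (s - ((c : ℂ) + Complex.I * y)))
      = (Real.sqrt (2 * Real.pi) : ℂ) * Complex.exp (s^2/2) * gI s := by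
  -- notation
  set η : ℝ → ℂ := fun y => (c : ℂ) + Complex.I * y with hη
  have hre_sub : ∀ y : ℝ, (s - η y).re = s.re - c := by
    intro y; simp [hη]
  -- step 1: Laplace representation of 1/(s-η)
  have h1 : ∀ y : ℝ, Complex.exp ((η y)^2/2) / (s - η y)
      = ∫ t in Ioi (0:ℝ), Complex.exp ((η y)^2/2) * Complex.exp (-(t:ℂ) * (s - η y)) := by
    intro y
    rw [MeasureTheory.integral_const_mul, integral_cexp_neg_mul_Ioi (by rw [hre_sub]; linarith)]
    rw [div_eq_mul_inv]
  rw [integral_congr_ae (Filter.Eventually.of_forall h1)]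
  -- step 2: Fubini
  have hInt : Integrable (Function.uncurry (fun (y : ℝ) (t : ℝ) =>
      Complex.exp ((η y)^2/2) * Complex.exp (-(t:ℂ) * (s - η y))))
      (volume.prod (volume.restrict (Ioi 0))) := by
    have hbound : Integrable (fun z : ℝ × ℝ =>
        (Real.exp (c^2/2) * Real.exp (-(1/2) * z.1^2)) * Real.exp (-(s.re - c) * z.2))
        (volume.prod (volume.restrict (Ioi 0))) := by
      exact Integrable.mul_prod ((integrable_exp_neg_mul_sq (by norm_num)).const_mul _)
        (exp_neg_integrableOn_Ioi 0 (by linarith))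
    have hcontF : Continuous (fun z : ℝ × ℝ =>
        Complex.exp ((η z.1)^2/2) * Complex.exp (-(z.2:ℂ) * (s - η z.1))) := by
      rw [hη]; continuity
    refine hbound.mono' hcontF.aestronglyMeasurable ?_
    filter_upwards with z
    rw [Function.uncurry, norm_mul, Complex.norm_exp, Complex.norm_exp]
    have e1 : ((η z.1)^2/2).re = c^2/2 - z.1^2/2 := by
      simp [hη, div_eq_mul_inv, pow_two, Complex.mul_re, Complex.mul_im, Complex.add_re,
        Complex.add_im, Complex.inv_re, Complex.inv_im, Complex.normSq]
      ring
    have e2 : (-(z.2:ℂ) * (s - η z.1)).re = -(s.re - c) * z.2 := by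
      simp [hη, Complex.mul_re, Complex.sub_re, Complex.sub_im, Complex.add_re, Complex.add_im]
      ring
    rw [e1, e2]
    apply le_of_eq
    rw [← Real.exp_add, ← Real.exp_add, ← Real.exp_add]
    congr 1
    ring
  rw [MeasureTheory.integral_integral_swap hInt]
  -- step 3: inner Gaussian integral
  have h3 : ∀ t ∈ Ioi (0:ℝ), (∫ y : ℝ, Complex.exp ((η y)^2/2) * Complex.exp (-(t:ℂ) * (s - η y)))
      = (Real.sqrt (2 * Real.pi) : ℂ) * Complex.exp (s^2/2) * Complex.exp (-((t:ℂ) + s)^2/2) := by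
    intro t _
    have hexp : ∀ y : ℝ, Complex.exp ((η y)^2/2) * Complex.exp (-(t:ℂ) * (s - η y))
        = Complex.exp ((-(1/2) : ℂ) * (y:ℂ)^2 + (Complex.I * ((c:ℂ) + (t:ℂ))) * (y:ℂ)
            + ((c:ℂ)^2/2 + (t:ℂ)*(c:ℂ) - (t:ℂ)*s)) := by
      intro y
      rw [← Complex.exp_add]
      congr 1
      rw [hη]
      linear_combination ((y:ℂ)^2/2) * Complex.I_sq
    simp_rw [hexp]
    rw [integral_cexp_quadratic (by norm_num : ((-(1/2):ℂ)).re < 0)]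
    have hconst : ((Real.pi : ℂ) / -(-(1/2))) ^ ((1:ℂ)/2) = (Real.sqrt (2 * Real.pi) : ℂ) := by
      have h2π : ((Real.pi : ℂ) / -(-(1/2))) = (((2 * Real.pi : ℝ)) : ℂ) := by
        push_cast; ring
      rw [h2π, show ((1:ℂ)/2) = (((1/2:ℝ)):ℂ) by norm_num,
        ← Complex.ofReal_cpow (by positivity), Real.sqrt_eq_rpow]
    rw [hconst]
    rw [mul_assoc, ← Complex.exp_add]
    congr 1
    rw [show (Complex.I * ((c:ℂ) + (t:ℂ)))^2 = -((c:ℂ) + (t:ℂ))^2 by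
      linear_combination (((c:ℂ) + (t:ℂ))^2) * Complex.I_sq]
    field_simp
    ring
  rw [setIntegral_congr_fun measurableSet_Ioi h3]
  rw [MeasureTheory.integral_const_mul]
  rfl

/-- Faddeeva-type identity: for `Re(s) > 0` and `0 < c < Re(s)`,
`(1/√(2π)) e^{s²/2} ∫_{-∞}^{-s} e^{-x²/2} dx = (1/(2πi)) ∫_{Re(η)=c} e^{η²/2}/(s-η) dη`,
where the left path is `(-∞, -Re s] ∪ [-Re s, -s]` and the line is oriented upward. -/
theorem gaussian_contour_identity (s : ℂ) (hs : 0 < s.re) (c : ℝ)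
    (hc0 : 0 < c) (hc : c < s.re) :
    (Real.sqrt (2 * Real.pi) : ℂ)⁻¹ * Complex.exp (s ^ 2 / 2) *
      ((∫ x in Set.Iic (-s.re), Complex.exp (-(x : ℂ) ^ 2 / 2)) +
        ∫ t in (0 : ℝ)..1, (-s - (-(s.re : ℂ))) *
          Complex.exp (-((1 - (t : ℂ)) * (-(s.re : ℂ)) + (t : ℂ) * (-s)) ^ 2 / 2))
    = (2 * Real.pi * Complex.I)⁻¹ *
        (Complex.I * ∫ y : ℝ, Complex.exp (((c : ℂ) + Complex.I * y) ^ 2 / 2) /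
          (s - ((c : ℂ) + Complex.I * y))) := by
  rw [iic_eq_gI s.re, segment_eq s hs, rhs_eq s c hc0 hc]
  have hsum : gI (s.re : ℂ) + (gI s - gI (s.re : ℂ)) = gI s := by ring
  rw [hsum]
  have h : ((Real.sqrt (2*Real.pi) : ℝ):ℂ) * ((Real.sqrt (2*Real.pi) : ℝ):ℂ)
      = 2 * (Real.pi : ℂ) := by
    rw [← Complex.ofReal_mul, Real.mul_self_sqrt (by positivity)]
    push_cast; ring
  have hsq : ((Real.sqrt (2*Real.pi) : ℝ):ℂ) ≠ 0 := by
    simp only [ne_eq, Complex.ofReal_eq_zero]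
    positivity
  have hπ : (Real.pi : ℂ) ≠ 0 := by
    simp [Real.pi_ne_zero]
  have key : ((Real.sqrt (2*Real.pi) : ℝ):ℂ)⁻¹
      = (2 * (Real.pi:ℂ))⁻¹ * ((Real.sqrt (2*Real.pi) : ℝ):ℂ) := by
    rw [← h, mul_inv, mul_assoc, inv_mul_cancel₀ hsq, mul_one]
  have h3 : ∀ X : ℂ, ((2:ℂ) * Real.pi * Complex.I)⁻¹ * (Complex.I * X)
      = (2 * (Real.pi:ℂ))⁻¹ * X := by
    intro X
    field_simp [Complex.I_ne_zero]
  rw [key, h3]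
  ring
end

section
/- For all positive integers $k, l$: $(k+l) \cdot \frac{1}{(2\pi i)^2}\iint \eta\,\zeta\, \log(\zeta - \eta)\, e^{(k\eta^2 + l\zeta^2)/2}\, d\eta\, d\zeta = \frac{1}{(2\pi i)^2}\iint e^{(k\eta^2 + l\zeta^2)/2}\, d\eta\, d\zeta = \frac{1}{2\pi\sqrt{kl}}$, where $\eta$ ranges over a vertical line $\Re(\eta) = \mathfrak{a}$ and $\zeta$ over a vertical line $\Re(\zeta) = \mathfrak{b}$ with $\mathfrak{a} < \mathfrak{b}$ (both oriented upward), and $\log$ is the principal branch, well-defined since $\Re(\zeta - \eta) > 0$. -/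
open MeasureTheory Real Filter Complex Set Topology intervalIntegral

namespace DCI

noncomputable def eta (c : ℝ) (y : ℝ) : ℂ := (c : ℂ) + Complex.I * y
noncomputable def E (p : ℕ) (c : ℝ) (y : ℝ) : ℂ :=
  Complex.exp ((p : ℂ) * ((c : ℂ) + Complex.I * y) ^ 2 / 2)
noncomputable def W (a b : ℝ) (y y' : ℝ) : ℂ := ((b : ℂ) + Complex.I * y') - ((a : ℂ) + Complex.I * y)
noncomputable def LG (a b : ℝ) (y y' : ℝ) : ℂ := Complex.log (W a b y y')
noncomputable def B₀ (a b : ℝ) : ℝ := π + |Real.log (b - a)| + (b - a)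

lemma quad_decomp (p c y : ℝ) : (p:ℂ) * ((c:ℂ) + Complex.I*y)^2/2
    = ((p*(c^2 - y^2)/2 : ℝ) : ℂ) + ((p*c*y : ℝ) : ℂ) * Complex.I := by
  push_cast
  ring_nf
  rw [Complex.I_sq]
  ring

lemma normE (p : ℕ) (c y : ℝ) : ‖E p c y‖ = Real.exp ((p:ℝ) * (c^2 - y^2) / 2) := by
  rw [E, show ((p:ℕ):ℂ) = ((p:ℝ):ℂ) by norm_cast, quad_decomp,
    Complex.norm_exp]
  simp [← Complex.ofReal_pow]

lemma norm_eta_le (c y : ℝ) : ‖eta c y‖ ≤ |c| + |y| := by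
  refine (norm_add_le _ _).trans ?_
  simp [eta]

lemma W_re (a b y y' : ℝ) : (W a b y y').re = b - a := by simp [W]

lemma W_mem (a b : ℝ) (hab : a < b) (y y' : ℝ) : W a b y y' ∈ Complex.slitPlane := by
  rw [Complex.mem_slitPlane_iff, W_re]
  left; linarith

lemma W_ne (a b : ℝ) (hab : a < b) (y y' : ℝ) : W a b y y' ≠ 0 :=
  Complex.slitPlane_ne_zero (W_mem a b hab y y')

lemma norm_W_le (a b y y' : ℝ) : ‖W a b y y'‖ ≤ |b - a| + (|y| + |y'|) := by
  have h := Complex.norm_le_abs_re_add_abs_im (W a b y y')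
  refine h.trans ?_
  rw [W_re]
  have : (W a b y y').im = y' - y := by simp [W]
  rw [this]
  have := abs_sub (y') (y)
  gcongr
  rw [abs_sub_comm]
  exact (abs_sub _ _).trans (by linarith [abs_nonneg y, abs_nonneg y'])

lemma ba_le_norm_W (a b : ℝ) (hab : a < b) (y y' : ℝ) : b - a ≤ ‖W a b y y'‖ := by
  rw [← W_re a b y y']
  exact Complex.re_le_norm _

lemma norm_W_inv_le (a b : ℝ) (hab : a < b) (y y' : ℝ) :
    ‖(W a b y y')⁻¹‖ ≤ (b - a)⁻¹ := by
  rw [norm_inv]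
  exact inv_anti₀ (by linarith) (ba_le_norm_W a b hab y y')

lemma norm_LG_le (a b : ℝ) (hab : a < b) (y y' : ℝ) :
    ‖LG a b y y'‖ ≤ B₀ a b + |y| + |y'| := by
  have hba : 0 < b - a := by linarith
  have hW := W_ne a b hab y y'
  have h1 : ‖LG a b y y'‖ ≤ |Real.log (‖W a b y y'‖)| + π := by
    rw [LG]
    refine (Complex.norm_le_abs_re_add_abs_im _).trans ?_
    rw [Complex.log_re, Complex.log_im]
    gcongr
    exact Complex.abs_arg_le_pi _
  refine h1.trans ?_
  rw [B₀]
  have habs : 0 < ‖W a b y y'‖ := norm_pos_iff.mpr hW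
  rcases le_or_gt 1 (‖W a b y y'‖) with h | h
  · have h2 : |Real.log (‖W a b y y'‖)| = Real.log (‖W a b y y'‖) :=
      abs_of_nonneg (Real.log_nonneg h)
    rw [h2]
    have h3 : Real.log (‖W a b y y'‖) ≤ ‖W a b y y'‖ - 1 :=
      Real.log_le_sub_one_of_pos habs
    have h4 := norm_W_le a b y y'
    have h5 : |b - a| = b - a := abs_of_pos hba
    have := abs_nonneg (Real.log (b - a))
    nlinarith
  · have hle : b - a ≤ ‖W a b y y'‖ := ba_le_norm_W a b hab y y'
    have h2 : Real.log (‖W a b y y'‖) < 0 := Real.log_neg habs h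
    have h3 : Real.log (b - a) ≤ Real.log (‖W a b y y'‖) :=
      Real.log_le_log hba hle
    have h4 : |Real.log (‖W a b y y'‖)| ≤ |Real.log (b - a)| := by
      rw [abs_of_neg h2]
      rw [abs_of_neg (by linarith : Real.log (b - a) < 0)]
      linarith
    have := abs_nonneg y
    have := abs_nonneg y'
    linarith

lemma B₀_pos (a b : ℝ) (hab : a < b) : 0 < B₀ a b := by
  have h1 := Real.pi_pos
  have h2 : (0:ℝ) ≤ |Real.log (b-a)| := abs_nonneg _
  rw [B₀]; linarith

lemma mul_le_mul₃ {a1 b1 a2 b2 a3 b3 : ℝ} (h1 : a1 ≤ b1) (h2 : a2 ≤ b2) (h3 : a3 ≤ b3)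
    (n1 : 0 ≤ a1) (n2 : 0 ≤ a2) (n3 : 0 ≤ a3) : a1 * a2 * a3 ≤ b1 * b2 * b3 := by
  have : a1 * a2 ≤ b1 * b2 := mul_le_mul h1 h2 n2 (n1.trans h1)
  exact mul_le_mul this h3 n3 (mul_nonneg (n1.trans h1) (n2.trans h2))

-- derivatives
lemma hasDerivAt_eta (c : ℝ) (y : ℝ) : HasDerivAt (eta c) Complex.I y := by
  have h := ((Complex.ofRealCLM.hasDerivAt (x := y)).const_mul Complex.I).const_add (c:ℂ)
  simp only [Complex.ofRealCLM_apply, Complex.ofReal_one, mul_one] at h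
  exact h

lemma hasDerivAt_E (p : ℕ) (c : ℝ) (y : ℝ) :
    HasDerivAt (E p c) ((p:ℂ) * eta c y * Complex.I * E p c y) y := by
  have h1 := hasDerivAt_eta c y
  have h2 := ((h1.mul h1).const_mul (p:ℂ)).div_const 2
  have h3 := h2.cexp
  have h4 : E p c = fun y => Complex.exp ((p:ℂ) * (eta c y * eta c y) / 2) := by
    funext t; rw [E, eta, sq]
  simp only [h4]
  convert h3 using 1
  · funext t; simp only [Pi.mul_apply]
  · simp only [Pi.mul_apply]
    ring

lemma hasDerivAt_W_snd (a b : ℝ) (y y' : ℝ) :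
    HasDerivAt (fun t => W a b y t) Complex.I y' := by
  have h : (fun t => W a b y t) = fun t => eta b t - ((a:ℂ) + Complex.I * y) := rfl
  rw [h]
  exact (hasDerivAt_eta b y').sub_const _

lemma hasDerivAt_W_fst (a b : ℝ) (y y' : ℝ) :
    HasDerivAt (fun t => W a b t y') (-Complex.I) y := by
  have h : (fun t => W a b t y') = fun t => ((b:ℂ) + Complex.I * y') - eta a t := rfl
  rw [h]
  exact (hasDerivAt_eta a y).const_sub _

lemma hasDerivAt_LG_snd (a b : ℝ) (hab : a < b) (y y' : ℝ) :
    HasDerivAt (fun t => LG a b y t) ((W a b y y')⁻¹ * Complex.I) y' := by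
  have h := (Complex.hasDerivAt_log (W_mem a b hab y y')).comp y' (hasDerivAt_W_snd a b y y')
  exact h

lemma hasDerivAt_LG_fst (a b : ℝ) (hab : a < b) (y y' : ℝ) :
    HasDerivAt (fun t => LG a b t y') ((W a b y y')⁻¹ * -Complex.I) y := by
  have h := (Complex.hasDerivAt_log (W_mem a b hab y y')).comp y (hasDerivAt_W_fst a b y y')
  exact h

-- continuity
lemma cont_W2 (a b : ℝ) : Continuous fun z : ℝ × ℝ => W a b z.1 z.2 := by
  unfold W; fun_prop

lemma cont_LG2 (a b : ℝ) (hab : a < b) :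
    Continuous fun z : ℝ × ℝ => LG a b z.1 z.2 := by
  rw [continuous_iff_continuousAt]
  intro z
  exact ContinuousAt.comp (x := z) (g := Complex.log) (f := fun z : ℝ × ℝ => W a b z.1 z.2)
    (continuousAt_clog (W_mem a b hab z.1 z.2)) (cont_W2 a b).continuousAt

lemma cont_Winv2 (a b : ℝ) (hab : a < b) :
    Continuous fun z : ℝ × ℝ => (W a b z.1 z.2)⁻¹ :=
  (cont_W2 a b).inv₀ fun z => W_ne a b hab z.1 z.2

lemma cont_eta (c : ℝ) : Continuous (eta c) := by unfold eta; fun_prop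

lemma cont_E (p : ℕ) (c : ℝ) : Continuous (E p c) := by unfold E; fun_prop

lemma cont_W_snd (a b : ℝ) (y : ℝ) : Continuous fun t => W a b y t := by
  unfold W; fun_prop

lemma cont_W_fst (a b : ℝ) (y' : ℝ) : Continuous fun t => W a b t y' := by
  unfold W; fun_prop

lemma cont_LG_snd (a b : ℝ) (hab : a < b) (y : ℝ) :
    Continuous fun t => LG a b y t := by
  rw [continuous_iff_continuousAt]
  intro t
  exact ContinuousAt.comp (x := t) (g := Complex.log) (f := fun t => W a b y t)
    (continuousAt_clog (W_mem a b hab y t)) (cont_W_snd a b y).continuousAt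

lemma cont_LG_fst (a b : ℝ) (hab : a < b) (y' : ℝ) :
    Continuous fun t => LG a b t y' := by
  rw [continuous_iff_continuousAt]
  intro t
  exact ContinuousAt.comp (x := t) (g := Complex.log) (f := fun t => W a b t y')
    (continuousAt_clog (W_mem a b hab t y')) (cont_W_fst a b y').continuousAt

lemma cont_Winv_snd (a b : ℝ) (hab : a < b) (y : ℝ) :
    Continuous fun t => (W a b y t)⁻¹ :=
  (cont_W_snd a b y).inv₀ fun t => W_ne a b hab y t

lemma cont_Winv_fst (a b : ℝ) (hab : a < b) (y' : ℝ) :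
    Continuous fun t => (W a b t y')⁻¹ :=
  (cont_W_fst a b y').inv₀ fun t => W_ne a b hab t y'

-- integrability building blocks
lemma gauss_mom {b : ℝ} (hb : 0 < b) (m : ℕ) :
    Integrable fun y : ℝ => |y| ^ m * Real.exp (-b * y ^ 2) := by
  have hm : (-1:ℝ) < (m:ℝ) :=
    lt_of_lt_of_le (by norm_num) (Nat.cast_nonneg m)
  have h := (integrable_rpow_mul_exp_neg_mul_sq hb hm).abs
  refine h.congr (Eventually.of_forall fun y => ?_)
  show |y ^ (m:ℝ) * Real.exp (-b * y^2)| = _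
  rw [Real.rpow_natCast, abs_mul, _root_.abs_pow, _root_.abs_of_nonneg (Real.exp_pos _).le]

lemma exp_quad_split (p c y : ℝ) :
    Real.exp (p * (c ^ 2 - y ^ 2) / 2) = Real.exp (p * c ^ 2 / 2) * Real.exp (-(p/2) * y ^ 2) := by
  rw [← Real.exp_add]; ring_nf

lemma integrable_poly_gauss {p : ℝ} (hp : 0 < p) (c Q : ℝ) (n : ℕ) :
    Integrable fun y : ℝ => (Q + |y|) ^ n * Real.exp (p * (c ^ 2 - y ^ 2) / 2) := by
  have key : ∀ y : ℝ, (Q + |y|) ^ n * Real.exp (p * (c ^ 2 - y ^ 2) / 2)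
      = ∑ i ∈ Finset.range (n+1),
          (Q ^ i * (n.choose i) * Real.exp (p * c ^ 2 / 2)) *
            (|y| ^ (n - i) * Real.exp (-(p/2) * y ^ 2)) := by
    intro y
    rw [exp_quad_split, add_pow, Finset.sum_mul]
    refine Finset.sum_congr rfl fun i _ => by push_cast; ring
  have h : Integrable fun y : ℝ => ∑ i ∈ Finset.range (n+1),
      (Q ^ i * (n.choose i) * Real.exp (p * c ^ 2 / 2)) *
        (|y| ^ (n - i) * Real.exp (-(p/2) * y ^ 2)) :=
    integrable_finset_sum _ fun i _ => (gauss_mom (by linarith) (n - i)).const_mul _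
  exact h.congr (Eventually.of_forall fun y => (key y).symm)

lemma integrable_dom {p : ℝ} (hp : 0 < p) (c : ℝ) {f : ℝ → ℂ}
    (hm : AEStronglyMeasurable f volume) (C Q : ℝ) (n : ℕ)
    (hb : ∀ t, ‖f t‖ ≤ C * ((Q + |t|) ^ n * Real.exp (p * (c ^ 2 - t ^ 2) / 2))) :
    Integrable f :=
  Integrable.mono' ((integrable_poly_gauss hp c Q n).const_mul C) hm (Eventually.of_forall hb)

lemma integrable_dom2 {p q : ℝ} (hp : 0 < p) (hq : 0 < q) (c d : ℝ) {f : ℝ × ℝ → ℂ}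
    (hm : AEStronglyMeasurable f (volume : Measure (ℝ × ℝ))) (C Q : ℝ) (n m : ℕ)
    (hb : ∀ z : ℝ × ℝ, ‖f z‖ ≤ C * (((Q + |z.1|) ^ n * Real.exp (p * (c ^ 2 - z.1 ^ 2) / 2)) *
      ((Q + |z.2|) ^ m * Real.exp (q * (d ^ 2 - z.2 ^ 2) / 2)))) :
    Integrable f := by
  have h := ((integrable_poly_gauss hp c Q n).mul_prod (integrable_poly_gauss hq d Q m)).const_mul C
  rw [← MeasureTheory.Measure.volume_eq_prod] at h
  exact Integrable.mono' h hm (Eventually.of_forall hb)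

-- decay
lemma tendsto_poly_gauss_top {p : ℝ} (hp : 0 < p) (c c₁ : ℝ) :
    Tendsto (fun y : ℝ => (c₁ + |y|) * Real.exp (p * (c ^ 2 - y ^ 2) / 2)) atTop (𝓝 0) := by
  have hq : Tendsto (fun y : ℝ => -(p/2) * y ^ 2) atTop atBot :=
    (tendsto_pow_atTop two_ne_zero).const_mul_atTop_of_neg (by linarith)
  have hexp : Tendsto (fun y : ℝ => Real.exp (-(p/2) * y ^ 2)) atTop (𝓝 0) :=
    Real.tendsto_exp_atBot.comp hq
  have h1 : Tendsto (fun y : ℝ => y * Real.exp (-(p/2) * y ^ 2)) atTop (𝓝 0) := by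
    have hlo := (rpow_mul_exp_neg_mul_sq_isLittleO_exp_neg (half_pos hp) 1).isBigO
    have hexp2 : Tendsto (fun x : ℝ => Real.exp (-(1/2) * x)) atTop (𝓝 0) :=
      Real.tendsto_exp_atBot.comp (tendsto_id.const_mul_atTop_of_neg (by norm_num))
    have h := hlo.trans_tendsto hexp2
    have heq : (fun x : ℝ => x ^ (1:ℝ) * Real.exp (-(p/2) * x ^ 2))
        = fun x : ℝ => x * Real.exp (-(p/2) * x ^ 2) := by
      funext x; rw [Real.rpow_one]
    rwa [heq] at h
  have h1' : Tendsto (fun y : ℝ => |y| * Real.exp (-(p/2) * y ^ 2)) atTop (𝓝 0) := by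
    refine Tendsto.congr' ?_ h1
    filter_upwards [eventually_ge_atTop (0:ℝ)] with y hy
    rw [_root_.abs_of_nonneg hy]
  have h2 : Tendsto (fun y : ℝ => (c₁ + |y|) * Real.exp (-(p/2) * y ^ 2)) atTop (𝓝 0) := by
    have h := (hexp.const_mul c₁).add h1'
    simp only [mul_zero, add_zero] at h
    refine h.congr fun y => ?_
    ring
  have h3 := h2.const_mul (Real.exp (p * c ^ 2 / 2))
  simp only [mul_zero] at h3
  refine h3.congr fun y => ?_
  rw [exp_quad_split]
  ring

lemma tendsto_poly_gauss_bot {p : ℝ} (hp : 0 < p) (c c₁ : ℝ) :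
    Tendsto (fun y : ℝ => (c₁ + |y|) * Real.exp (p * (c ^ 2 - y ^ 2) / 2)) atBot (𝓝 0) := by
  have h : (fun y : ℝ => (c₁ + |y|) * Real.exp (p * (c ^ 2 - y ^ 2) / 2))
      = (fun y : ℝ => (c₁ + |y|) * Real.exp (p * (c ^ 2 - y ^ 2) / 2)) ∘ (fun y : ℝ => -y) := by
    funext y; simp [Function.comp]
  rw [h]
  exact (tendsto_poly_gauss_top hp c c₁).comp tendsto_neg_atBot_atTop

-- FTC
lemma integral_deriv_eq_zero {G G' : ℝ → ℂ} (hd : ∀ y, HasDerivAt G (G' y) y)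
    (hi : Integrable G') (hbot : Tendsto G atBot (𝓝 0)) (htop : Tendsto G atTop (𝓝 0)) :
    ∫ y, G' y = 0 := by
  have h1 : ∫ y in Iic (0:ℝ), G' y = G 0 - 0 :=
    integral_Iic_of_hasDerivAt_of_tendsto' (fun x _ => hd x) hi.integrableOn hbot
  have h2 : ∫ y in Ioi (0:ℝ), G' y = 0 - G 0 :=
    integral_Ioi_of_hasDerivAt_of_tendsto' (fun x _ => hd x) hi.integrableOn htop
  rw [← integral_Iic_add_Ioi hi.integrableOn hi.integrableOn, h1, h2]
  ring

-- Gaussian line integral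
lemma gaussE (p : ℕ) (hp : 1 ≤ p) (c : ℝ) :
    ∫ y : ℝ, E p c y = ((Real.sqrt (2 * π / p) : ℝ) : ℂ) := by
  have hp' : (0:ℝ) < p := by exact_mod_cast hp
  have hre : (0:ℝ) < ((p:ℂ)/2).re := by
    norm_num [Complex.div_re]
    exact_mod_cast hp'
  have h := GaussianFourier.integral_cexp_neg_mul_sq_add_real_mul_I (b := (p:ℂ)/2) hre (-c)
  have heq : ∀ y : ℝ, Complex.exp (-((p:ℂ)/2) * ((y:ℂ) + ((-c : ℝ):ℂ) * Complex.I)^2)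
      = E p c y := by
    intro y
    rw [E]
    congr 1
    push_cast
    linear_combination (-((p:ℂ))/2*((c:ℂ)^2+(y:ℂ)^2)) * Complex.I_sq
  have h2 : ((π : ℂ) / ((p:ℂ)/2)) = ((2*π/p : ℝ) : ℂ) := by
    have : ((p:ℂ)) ≠ 0 := by exact_mod_cast hp'.ne'
    push_cast
    rw [div_div_eq_mul_div]
    ring
  have h3 : ((2*π/p:ℝ):ℂ) ^ (1/2 : ℂ) = ((Real.sqrt (2*π/p) : ℝ) : ℂ) := by
    rw [Real.sqrt_eq_rpow, Complex.ofReal_cpow (by positivity)]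
    norm_num
  rw [h2, h3] at h
  rw [← h]
  congr 1
  funext y
  rw [← heq y]


section Main

variable {k l : ℕ} {a b : ℝ}

-- abbreviations for the three integrands
noncomputable def F (k l : ℕ) (a b : ℝ) (y y' : ℝ) : ℂ :=
  eta a y * eta b y' * LG a b y y' * (E k a y * E l b y')
noncomputable def V1 (k l : ℕ) (a b : ℝ) (y y' : ℝ) : ℂ :=
  eta a y * (W a b y y')⁻¹ * (E k a y * E l b y')
noncomputable def V2 (k l : ℕ) (a b : ℝ) (y y' : ℝ) : ℂ :=
  eta b y' * (W a b y y')⁻¹ * (E k a y * E l b y')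

lemma Q_facts (a b : ℝ) (hab : a < b) :
    1 ≤ B₀ a b + |a| + |b| + 1 ∧ B₀ a b ≤ B₀ a b + |a| + |b| + 1 := by
  have h1 := abs_nonneg a
  have h2 := abs_nonneg b
  have := B₀_pos a b hab
  constructor <;> linarith

-- slice integrability in the second variable
lemma intF_snd (hk : 1 ≤ k) (hl : 1 ≤ l) (hab : a < b) (y : ℝ) :
    Integrable fun t => F k l a b y t := by
  have hl' : (0:ℝ) < l := by exact_mod_cast hl
  set Q : ℝ := B₀ a b + |a| + |b| + |y| + 1 with hQ
  have hQb : |b| ≤ Q := by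
    have := B₀_pos a b hab
    have := abs_nonneg a; have := abs_nonneg y
    simp only [hQ]; linarith
  have hQB : B₀ a b + |y| ≤ Q := by
    have := abs_nonneg a; have := abs_nonneg b
    simp only [hQ]; linarith
  refine integrable_dom hl' b ?_ ((|a| + |y|) * Real.exp ((k:ℝ) * (a^2 - y^2)/2)) Q 2 ?_
  · apply Continuous.aestronglyMeasurable
    exact ((continuous_const.mul (cont_eta b)).mul (cont_LG_snd a b hab y)).mul
      (continuous_const.mul (cont_E l b))
  · intro t
    have h1 : ‖eta a y‖ ≤ |a| + |y| := norm_eta_le a y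
    have h2 : ‖eta b t‖ ≤ Q + |t| := (norm_eta_le b t).trans (by gcongr)
    have h3 : ‖LG a b y t‖ ≤ Q + |t| := (norm_LG_le a b hab y t).trans (by linarith [hQB])
    calc ‖F k l a b y t‖
        = (‖eta a y‖ * ‖eta b t‖ * ‖LG a b y t‖) *
          (Real.exp ((k:ℝ) * (a^2 - y^2)/2) * Real.exp ((l:ℝ) * (b^2 - t^2)/2)) := by
          rw [F, norm_mul, norm_mul, norm_mul, norm_mul, normE, normE] <;> try ring
      _ ≤ ((|a| + |y|) * (Q + |t|) * (Q + |t|)) *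
          (Real.exp ((k:ℝ) * (a^2 - y^2)/2) * Real.exp ((l:ℝ) * (b^2 - t^2)/2)) := by
          refine mul_le_mul_of_nonneg_right ?_ (by positivity)
          first
          | exact mul_le_mul₃ h1 h2 h3 (norm_nonneg _) (norm_nonneg _) (norm_nonneg _)
          | exact mul_le_mul h1 h2 (norm_nonneg _) ((norm_nonneg _).trans h1)
      _ = (|a| + |y|) * Real.exp ((k:ℝ) * (a^2 - y^2)/2) *
          ((Q + |t|) ^ 2 * Real.exp ((l:ℝ) * (b^2 - t^2)/2)) := by ring

lemma intV1_snd (hk : 1 ≤ k) (hl : 1 ≤ l) (hab : a < b) (y : ℝ) :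
    Integrable fun t => V1 k l a b y t := by
  have hl' : (0:ℝ) < l := by exact_mod_cast hl
  refine integrable_dom hl' b ?_
    ((|a| + |y|) * (b-a)⁻¹ * Real.exp ((k:ℝ) * (a^2 - y^2)/2)) 1 0 ?_
  · apply Continuous.aestronglyMeasurable
    exact ((continuous_const.mul (cont_Winv_snd a b hab y)).mul
      (continuous_const.mul (cont_E l b)))
  · intro t
    have h1 : ‖eta a y‖ ≤ |a| + |y| := norm_eta_le a y
    have h2 : ‖(W a b y t)⁻¹‖ ≤ (b-a)⁻¹ := norm_W_inv_le a b hab y t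
    have hba : (0:ℝ) < b - a := by linarith
    calc ‖V1 k l a b y t‖
        = (‖eta a y‖ * ‖(W a b y t)⁻¹‖) *
          (Real.exp ((k:ℝ) * (a^2 - y^2)/2) * Real.exp ((l:ℝ) * (b^2 - t^2)/2)) := by
          rw [V1, norm_mul, norm_mul, norm_mul, normE, normE] <;> try ring
      _ ≤ ((|a| + |y|) * (b-a)⁻¹) *
          (Real.exp ((k:ℝ) * (a^2 - y^2)/2) * Real.exp ((l:ℝ) * (b^2 - t^2)/2)) := by
          refine mul_le_mul_of_nonneg_right ?_ (by positivity)
          first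
          | exact mul_le_mul₃ h1 h2 h3 (norm_nonneg _) (norm_nonneg _) (norm_nonneg _)
          | exact mul_le_mul h1 h2 (norm_nonneg _) ((norm_nonneg _).trans h1)
      _ = (|a| + |y|) * (b-a)⁻¹ * Real.exp ((k:ℝ) * (a^2 - y^2)/2) *
          ((1 + |t|) ^ 0 * Real.exp ((l:ℝ) * (b^2 - t^2)/2)) := by ring

lemma intV2_fst (hk : 1 ≤ k) (hl : 1 ≤ l) (hab : a < b) (y' : ℝ) :
    Integrable fun t => V2 k l a b t y' := by
  have hk' : (0:ℝ) < k := by exact_mod_cast hk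
  refine integrable_dom hk' a ?_
    ((|b| + |y'|) * (b-a)⁻¹ * Real.exp ((l:ℝ) * (b^2 - y'^2)/2)) 1 0 ?_
  · apply Continuous.aestronglyMeasurable
    exact ((continuous_const.mul (cont_Winv_fst a b hab y')).mul
      ((cont_E k a).mul continuous_const))
  · intro t
    have h1 : ‖eta b y'‖ ≤ |b| + |y'| := norm_eta_le b y'
    have h2 : ‖(W a b t y')⁻¹‖ ≤ (b-a)⁻¹ := norm_W_inv_le a b hab t y'
    have hba : (0:ℝ) < b - a := by linarith
    calc ‖V2 k l a b t y'‖
        = (‖eta b y'‖ * ‖(W a b t y')⁻¹‖) *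
          (Real.exp ((k:ℝ) * (a^2 - t^2)/2) * Real.exp ((l:ℝ) * (b^2 - y'^2)/2)) := by
          rw [V2, norm_mul, norm_mul, norm_mul, normE, normE] <;> try ring
      _ ≤ ((|b| + |y'|) * (b-a)⁻¹) *
          (Real.exp ((k:ℝ) * (a^2 - t^2)/2) * Real.exp ((l:ℝ) * (b^2 - y'^2)/2)) := by
          refine mul_le_mul_of_nonneg_right ?_ (by positivity)
          first
          | exact mul_le_mul₃ h1 h2 h3 (norm_nonneg _) (norm_nonneg _) (norm_nonneg _)
          | exact mul_le_mul h1 h2 (norm_nonneg _) ((norm_nonneg _).trans h1)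
      _ = (|b| + |y'|) * (b-a)⁻¹ * Real.exp ((l:ℝ) * (b^2 - y'^2)/2) *
          ((1 + |t|) ^ 0 * Real.exp ((k:ℝ) * (a^2 - t^2)/2)) := by ring

lemma intF_fst (hk : 1 ≤ k) (hl : 1 ≤ l) (hab : a < b) (y' : ℝ) :
    Integrable fun t => F k l a b t y' := by
  have hk' : (0:ℝ) < k := by exact_mod_cast hk
  set Q : ℝ := B₀ a b + |a| + |b| + |y'| + 1 with hQ
  have hQa : |a| ≤ Q := by
    have := B₀_pos a b hab
    have := abs_nonneg b; have := abs_nonneg y'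
    simp only [hQ]; linarith
  have hQB : B₀ a b + |y'| ≤ Q := by
    have := abs_nonneg a; have := abs_nonneg b
    simp only [hQ]; linarith
  refine integrable_dom hk' a ?_ ((|b| + |y'|) * Real.exp ((l:ℝ) * (b^2 - y'^2)/2)) Q 2 ?_
  · apply Continuous.aestronglyMeasurable
    exact (((cont_eta a).mul continuous_const).mul (cont_LG_fst a b hab y')).mul
      ((cont_E k a).mul continuous_const)
  · intro t
    have h1 : ‖eta b y'‖ ≤ |b| + |y'| := norm_eta_le b y'
    have h2 : ‖eta a t‖ ≤ Q + |t| := (norm_eta_le a t).trans (by gcongr)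
    have h3 : ‖LG a b t y'‖ ≤ Q + |t| := by
      refine (norm_LG_le a b hab t y').trans ?_
      have := hQB; linarith
    calc ‖F k l a b t y'‖
        = (‖eta b y'‖ * ‖eta a t‖ * ‖LG a b t y'‖) *
          (Real.exp ((k:ℝ) * (a^2 - t^2)/2) * Real.exp ((l:ℝ) * (b^2 - y'^2)/2)) := by
          rw [F, norm_mul, norm_mul, norm_mul, norm_mul, normE, normE] <;> try ring
      _ ≤ ((|b| + |y'|) * (Q + |t|) * (Q + |t|)) *
          (Real.exp ((k:ℝ) * (a^2 - t^2)/2) * Real.exp ((l:ℝ) * (b^2 - y'^2)/2)) := by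
          refine mul_le_mul_of_nonneg_right ?_ (by positivity)
          first
          | exact mul_le_mul₃ h1 h2 h3 (norm_nonneg _) (norm_nonneg _) (norm_nonneg _)
          | exact mul_le_mul h1 h2 (norm_nonneg _) ((norm_nonneg _).trans h1)
      _ = (|b| + |y'|) * Real.exp ((l:ℝ) * (b^2 - y'^2)/2) *
          ((Q + |t|) ^ 2 * Real.exp ((k:ℝ) * (a^2 - t^2)/2)) := by ring

-- joint integrability
lemma intF_joint (hk : 1 ≤ k) (hl : 1 ≤ l) (hab : a < b) :
    Integrable (fun z : ℝ × ℝ => F k l a b z.1 z.2) (volume : Measure (ℝ × ℝ)) := by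
  have hk' : (0:ℝ) < k := by exact_mod_cast hk
  have hl' : (0:ℝ) < l := by exact_mod_cast hl
  set Q : ℝ := B₀ a b + |a| + |b| + 1 with hQ
  obtain ⟨hQ1, hQB⟩ := Q_facts a b hab
  refine integrable_dom2 hk' hl' a b ?_ 1 Q 2 2 ?_
  · apply Continuous.aestronglyMeasurable
    refine Continuous.mul (Continuous.mul (Continuous.mul ?_ ?_) (cont_LG2 a b hab)) ?_
    · exact (cont_eta a).comp continuous_fst
    · exact (cont_eta b).comp continuous_snd
    · exact ((cont_E k a).comp continuous_fst).mul ((cont_E l b).comp continuous_snd)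
  · rintro ⟨y, y'⟩
    have h1 : ‖eta a y‖ ≤ Q + |y| := by
      refine (norm_eta_le a y).trans ?_
      have := B₀_pos a b hab; have := abs_nonneg b
      simp only [hQ]; gcongr; linarith
    have h2 : ‖eta b y'‖ ≤ Q + |y'| := by
      refine (norm_eta_le b y').trans ?_
      have := B₀_pos a b hab; have := abs_nonneg a
      simp only [hQ]; gcongr; linarith
    have h3 : ‖LG a b y y'‖ ≤ (Q + |y|) * (Q + |y'|) := by
      refine (norm_LG_le a b hab y y').trans ?_
      have hy := abs_nonneg y; have hy' := abs_nonneg y'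
      nlinarith [mul_nonneg hy hy']
    calc ‖F k l a b y y'‖
        = (‖eta a y‖ * ‖eta b y'‖ * ‖LG a b y y'‖) *
          (Real.exp ((k:ℝ) * (a^2 - y^2)/2) * Real.exp ((l:ℝ) * (b^2 - y'^2)/2)) := by
          rw [F, norm_mul, norm_mul, norm_mul, norm_mul, normE, normE] <;> try ring
      _ ≤ ((Q + |y|) * (Q + |y'|) * ((Q + |y|) * (Q + |y'|))) *
          (Real.exp ((k:ℝ) * (a^2 - y^2)/2) * Real.exp ((l:ℝ) * (b^2 - y'^2)/2)) := by
          refine mul_le_mul_of_nonneg_right ?_ (by positivity)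
          first
          | exact mul_le_mul₃ h1 h2 h3 (norm_nonneg _) (norm_nonneg _) (norm_nonneg _)
          | exact mul_le_mul h1 h2 (norm_nonneg _) ((norm_nonneg _).trans h1)
      _ = 1 * ((Q + |y|) ^ 2 * Real.exp ((k:ℝ) * (a^2 - y^2)/2) *
          ((Q + |y'|) ^ 2 * Real.exp ((l:ℝ) * (b^2 - y'^2)/2))) := by ring

lemma intV1_joint (hk : 1 ≤ k) (hl : 1 ≤ l) (hab : a < b) :
    Integrable (fun z : ℝ × ℝ => V1 k l a b z.1 z.2) (volume : Measure (ℝ × ℝ)) := by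
  have hk' : (0:ℝ) < k := by exact_mod_cast hk
  have hl' : (0:ℝ) < l := by exact_mod_cast hl
  have hba : (0:ℝ) < b - a := by linarith
  refine integrable_dom2 hk' hl' a b ?_ ((b-a)⁻¹) (|a|) 1 0 ?_
  · apply Continuous.aestronglyMeasurable
    refine Continuous.mul (Continuous.mul ?_ (cont_Winv2 a b hab)) ?_
    · exact (cont_eta a).comp continuous_fst
    · exact ((cont_E k a).comp continuous_fst).mul ((cont_E l b).comp continuous_snd)
  · rintro ⟨y, y'⟩
    have h1 : ‖eta a y‖ ≤ |a| + |y| := norm_eta_le a y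
    have h2 : ‖(W a b y y')⁻¹‖ ≤ (b-a)⁻¹ := norm_W_inv_le a b hab y y'
    calc ‖V1 k l a b y y'‖
        = (‖eta a y‖ * ‖(W a b y y')⁻¹‖) *
          (Real.exp ((k:ℝ) * (a^2 - y^2)/2) * Real.exp ((l:ℝ) * (b^2 - y'^2)/2)) := by
          rw [V1, norm_mul, norm_mul, norm_mul, normE, normE] <;> try ring
      _ ≤ ((|a| + |y|) * (b-a)⁻¹) *
          (Real.exp ((k:ℝ) * (a^2 - y^2)/2) * Real.exp ((l:ℝ) * (b^2 - y'^2)/2)) := by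
          refine mul_le_mul_of_nonneg_right ?_ (by positivity)
          first
          | exact mul_le_mul₃ h1 h2 h3 (norm_nonneg _) (norm_nonneg _) (norm_nonneg _)
          | exact mul_le_mul h1 h2 (norm_nonneg _) ((norm_nonneg _).trans h1)
      _ = (b-a)⁻¹ * ((|a| + |y|) ^ 1 * Real.exp ((k:ℝ) * (a^2 - y^2)/2) *
          ((|a| + |y'|) ^ 0 * Real.exp ((l:ℝ) * (b^2 - y'^2)/2))) := by ring

lemma intV2_joint (hk : 1 ≤ k) (hl : 1 ≤ l) (hab : a < b) :
    Integrable (fun z : ℝ × ℝ => V2 k l a b z.1 z.2) (volume : Measure (ℝ × ℝ)) := by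
  have hk' : (0:ℝ) < k := by exact_mod_cast hk
  have hl' : (0:ℝ) < l := by exact_mod_cast hl
  have hba : (0:ℝ) < b - a := by linarith
  refine integrable_dom2 hk' hl' a b ?_ ((b-a)⁻¹) (|b|) 0 1 ?_
  · apply Continuous.aestronglyMeasurable
    refine Continuous.mul (Continuous.mul ?_ (cont_Winv2 a b hab)) ?_
    · exact (cont_eta b).comp continuous_snd
    · exact ((cont_E k a).comp continuous_fst).mul ((cont_E l b).comp continuous_snd)
  · rintro ⟨y, y'⟩
    have h1 : ‖eta b y'‖ ≤ |b| + |y'| := norm_eta_le b y'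
    have h2 : ‖(W a b y y')⁻¹‖ ≤ (b-a)⁻¹ := norm_W_inv_le a b hab y y'
    calc ‖V2 k l a b y y'‖
        = (‖eta b y'‖ * ‖(W a b y y')⁻¹‖) *
          (Real.exp ((k:ℝ) * (a^2 - y^2)/2) * Real.exp ((l:ℝ) * (b^2 - y'^2)/2)) := by
          rw [V2, norm_mul, norm_mul, norm_mul, normE, normE] <;> try ring
      _ ≤ ((|b| + |y'|) * (b-a)⁻¹) *
          (Real.exp ((k:ℝ) * (a^2 - y^2)/2) * Real.exp ((l:ℝ) * (b^2 - y'^2)/2)) := by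
          refine mul_le_mul_of_nonneg_right ?_ (by positivity)
          first
          | exact mul_le_mul₃ h1 h2 h3 (norm_nonneg _) (norm_nonneg _) (norm_nonneg _)
          | exact mul_le_mul h1 h2 (norm_nonneg _) ((norm_nonneg _).trans h1)
      _ = (b-a)⁻¹ * ((|b| + |y|) ^ 0 * Real.exp ((k:ℝ) * (a^2 - y^2)/2) *
          ((|b| + |y'|) ^ 1 * Real.exp ((l:ℝ) * (b^2 - y'^2)/2))) := by ring

lemma keyA (hk : 1 ≤ k) (hl : 1 ≤ l) (hab : a < b) (y : ℝ) :
    ∫ t, (l:ℂ) * F k l a b y t = - ∫ t, V1 k l a b y t := by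
  have hl' : (0:ℝ) < l := by exact_mod_cast hl
  set H : ℝ → ℂ := fun t => (eta a y * E k a y) * (LG a b y t * E l b t) with hH
  have hd : ∀ t, HasDerivAt H
      (Complex.I * V1 k l a b y t + Complex.I * ((l:ℂ) * F k l a b y t)) t := by
    intro t
    have h1 := (hasDerivAt_LG_snd a b hab y t).mul (hasDerivAt_E l b t)
    have h2 := h1.const_mul (eta a y * E k a y)
    refine h2.congr_deriv ?_
    simp only [V1, F]
    ring
  have hiV1 := intV1_snd hk hl hab y
  have hiF := intF_snd hk hl hab y
  have hint : Integrable (fun t =>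
      Complex.I * V1 k l a b y t + Complex.I * ((l:ℂ) * F k l a b y t)) :=
    (hiV1.const_mul _).add ((hiF.const_mul _).const_mul _)
  have hbnd : ∀ t, ‖H t‖ ≤ ‖eta a y * E k a y‖ *
      ((B₀ a b + |y| + |t|) * Real.exp ((l:ℝ) * (b^2 - t^2)/2)) := by
    intro t
    have hin : ‖LG a b y t * E l b t‖
        ≤ (B₀ a b + |y| + |t|) * Real.exp ((l:ℝ) * (b^2 - t^2)/2) := by
      rw [norm_mul, normE]
      exact mul_le_mul_of_nonneg_right (norm_LG_le a b hab y t) (Real.exp_pos _).le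
    calc ‖H t‖ = ‖eta a y * E k a y‖ * ‖LG a b y t * E l b t‖ := norm_mul _ _
      _ ≤ _ := mul_le_mul_of_nonneg_left hin (norm_nonneg _)
  have htop : Tendsto H atTop (𝓝 0) := by
    refine squeeze_zero_norm hbnd ?_
    have h := (tendsto_poly_gauss_top hl' b (B₀ a b + |y|)).const_mul ‖eta a y * E k a y‖
    simpa [mul_zero] using h
  have hbot : Tendsto H atBot (𝓝 0) := by
    refine squeeze_zero_norm hbnd ?_
    have h := (tendsto_poly_gauss_bot hl' b (B₀ a b + |y|)).const_mul ‖eta a y * E k a y‖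
    simpa [mul_zero] using h
  have hzero := integral_deriv_eq_zero hd hint hbot htop
  rw [integral_add (hiV1.const_mul _) ((hiF.const_mul _).const_mul _),
    MeasureTheory.integral_const_mul, MeasureTheory.integral_const_mul, MeasureTheory.integral_const_mul] at hzero
  rw [MeasureTheory.integral_const_mul]
  have h2 : Complex.I * ((∫ t, V1 k l a b y t) + (l:ℂ) * ∫ t, F k l a b y t) = 0 := by
    linear_combination hzero
  have h3 : (∫ t, V1 k l a b y t) + (l:ℂ) * ∫ t, F k l a b y t = 0 :=
    (mul_eq_zero.mp h2).resolve_left Complex.I_ne_zero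
  linear_combination h3

lemma keyB (hk : 1 ≤ k) (hl : 1 ≤ l) (hab : a < b) (y' : ℝ) :
    ∫ t, (k:ℂ) * F k l a b t y' = ∫ t, V2 k l a b t y' := by
  have hk' : (0:ℝ) < k := by exact_mod_cast hk
  set H : ℝ → ℂ := fun t => (eta b y' * E l b y') * (LG a b t y' * E k a t) with hH
  have hd : ∀ t, HasDerivAt H
      (-Complex.I * V2 k l a b t y' + Complex.I * ((k:ℂ) * F k l a b t y')) t := by
    intro t
    have h1 := (hasDerivAt_LG_fst a b hab t y').mul (hasDerivAt_E k a t)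
    have h2 := h1.const_mul (eta b y' * E l b y')
    refine h2.congr_deriv ?_
    simp only [V2, F]
    ring
  have hiV2 := intV2_fst hk hl hab y'
  have hiF := intF_fst hk hl hab y'
  have hint : Integrable (fun t =>
      -Complex.I * V2 k l a b t y' + Complex.I * ((k:ℂ) * F k l a b t y')) :=
    (hiV2.const_mul _).add ((hiF.const_mul _).const_mul _)
  have hbnd : ∀ t, ‖H t‖ ≤ ‖eta b y' * E l b y'‖ *
      ((B₀ a b + |y'| + |t|) * Real.exp ((k:ℝ) * (a^2 - t^2)/2)) := by
    intro t
    have hin : ‖LG a b t y' * E k a t‖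
        ≤ (B₀ a b + |y'| + |t|) * Real.exp ((k:ℝ) * (a^2 - t^2)/2) := by
      rw [norm_mul, normE]
      exact mul_le_mul_of_nonneg_right
        ((norm_LG_le a b hab t y').trans (le_of_eq (by ring))) (Real.exp_pos _).le
    calc ‖H t‖ = ‖eta b y' * E l b y'‖ * ‖LG a b t y' * E k a t‖ := norm_mul _ _
      _ ≤ _ := mul_le_mul_of_nonneg_left hin (norm_nonneg _)
  have htop : Tendsto H atTop (𝓝 0) := by
    refine squeeze_zero_norm hbnd ?_
    have h := (tendsto_poly_gauss_top hk' a (B₀ a b + |y'|)).const_mul ‖eta b y' * E l b y'‖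
    simpa [mul_zero] using h
  have hbot : Tendsto H atBot (𝓝 0) := by
    refine squeeze_zero_norm hbnd ?_
    have h := (tendsto_poly_gauss_bot hk' a (B₀ a b + |y'|)).const_mul ‖eta b y' * E l b y'‖
    simpa [mul_zero] using h
  have hzero := integral_deriv_eq_zero hd hint hbot htop
  rw [integral_add (hiV2.const_mul _) ((hiF.const_mul _).const_mul _),
    MeasureTheory.integral_const_mul, MeasureTheory.integral_const_mul, MeasureTheory.integral_const_mul] at hzero
  rw [MeasureTheory.integral_const_mul]
  have h2 : Complex.I * ((k:ℂ) * (∫ t, F k l a b t y') - ∫ t, V2 k l a b t y') = 0 := by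
    linear_combination hzero
  have h3 : (k:ℂ) * (∫ t, F k l a b t y') - ∫ t, V2 k l a b t y' = 0 :=
    (mul_eq_zero.mp h2).resolve_left Complex.I_ne_zero
  linear_combination h3

lemma intV2_snd (hk : 1 ≤ k) (hl : 1 ≤ l) (hab : a < b) (y : ℝ) :
    Integrable fun t => V2 k l a b y t := by
  have hl' : (0:ℝ) < l := by exact_mod_cast hl
  have hba : (0:ℝ) < b - a := by linarith
  refine integrable_dom hl' b ?_
    ((b-a)⁻¹ * Real.exp ((k:ℝ) * (a^2 - y^2)/2)) (|b|) 1 ?_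
  · apply Continuous.aestronglyMeasurable
    exact (((cont_eta b).mul (cont_Winv_snd a b hab y)).mul
      (continuous_const.mul (cont_E l b)))
  · intro t
    have h1 : ‖eta b t‖ ≤ |b| + |t| := norm_eta_le b t
    have h2 : ‖(W a b y t)⁻¹‖ ≤ (b-a)⁻¹ := norm_W_inv_le a b hab y t
    calc ‖V2 k l a b y t‖
        = (‖eta b t‖ * ‖(W a b y t)⁻¹‖) *
          (Real.exp ((k:ℝ) * (a^2 - y^2)/2) * Real.exp ((l:ℝ) * (b^2 - t^2)/2)) := by
          rw [V2, norm_mul, norm_mul, norm_mul, normE, normE] <;> try ring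
      _ ≤ ((|b| + |t|) * (b-a)⁻¹) *
          (Real.exp ((k:ℝ) * (a^2 - y^2)/2) * Real.exp ((l:ℝ) * (b^2 - t^2)/2)) := by
          refine mul_le_mul_of_nonneg_right ?_ (by positivity)
          exact mul_le_mul h1 h2 (norm_nonneg _) ((norm_nonneg _).trans h1)
      _ = (b-a)⁻¹ * Real.exp ((k:ℝ) * (a^2 - y^2)/2) *
          ((|b| + |t|) ^ 1 * Real.exp ((l:ℝ) * (b^2 - t^2)/2)) := by ring

lemma hpt (hab : a < b) (y y' : ℝ) :
    V2 k l a b y y' - V1 k l a b y y' = E k a y * E l b y' := by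
  have h1 : eta b y' * (W a b y y')⁻¹ * (E k a y * E l b y')
      - eta a y * (W a b y y')⁻¹ * (E k a y * E l b y')
      = W a b y y' * (W a b y y')⁻¹ * (E k a y * E l b y') := by
    simp only [W, eta]; ring
  rw [V2, V1, h1, mul_inv_cancel₀ (W_ne a b hab y y'), one_mul]

lemma part1 (hk : 1 ≤ k) (hl : 1 ≤ l) (hab : a < b) :
    ((k:ℂ) + l) * (∫ y : ℝ, ∫ y' : ℝ, F k l a b y y')
      = ∫ y : ℝ, ∫ y' : ℝ, E k a y * E l b y' := by
  have hFj := intF_joint hk hl hab (a := a) (b := b)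
  have hV1j := intV1_joint hk hl hab (a := a) (b := b)
  have hV2j := intV2_joint hk hl hab (a := a) (b := b)
  rw [Measure.volume_eq_prod] at hFj hV1j hV2j
  -- l-part
  have hl1 : (l:ℂ) * (∫ y : ℝ, ∫ y' : ℝ, F k l a b y y')
      = - ∫ y : ℝ, ∫ y' : ℝ, V1 k l a b y y' := by
    rw [← MeasureTheory.integral_const_mul]
    calc ∫ y : ℝ, (l:ℂ) * ∫ y' : ℝ, F k l a b y y'
        = ∫ y : ℝ, ∫ y' : ℝ, (l:ℂ) * F k l a b y y' :=
          integral_congr_ae (Eventually.of_forall fun y => (MeasureTheory.integral_const_mul _ _).symm)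
      _ = ∫ y : ℝ, - ∫ y' : ℝ, V1 k l a b y y' :=
          integral_congr_ae (Eventually.of_forall fun y => keyA hk hl hab y)
      _ = - ∫ y : ℝ, ∫ y' : ℝ, V1 k l a b y y' := integral_neg _
  -- k-part (via Fubini)
  have hk1 : (k:ℂ) * (∫ y : ℝ, ∫ y' : ℝ, F k l a b y y')
      = ∫ y : ℝ, ∫ y' : ℝ, V2 k l a b y y' := by
    rw [← MeasureTheory.integral_const_mul]
    calc ∫ y : ℝ, (k:ℂ) * ∫ y' : ℝ, F k l a b y y'
        = ∫ y : ℝ, ∫ y' : ℝ, (k:ℂ) * F k l a b y y' :=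
          integral_congr_ae (Eventually.of_forall fun y => (MeasureTheory.integral_const_mul _ _).symm)
      _ = ∫ y' : ℝ, ∫ y : ℝ, (k:ℂ) * F k l a b y y' :=
          integral_integral_swap (hFj.const_mul ((k:ℂ)))
      _ = ∫ y' : ℝ, ∫ y : ℝ, V2 k l a b y y' :=
          integral_congr_ae (Eventually.of_forall fun y' => keyB hk hl hab y')
      _ = ∫ y : ℝ, ∫ y' : ℝ, V2 k l a b y y' :=
          (integral_integral_swap hV2j).symm
  have i2 : Integrable fun y : ℝ => ∫ y' : ℝ, V2 k l a b y y' := hV2j.integral_prod_left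
  have i1 : Integrable fun y : ℝ => ∫ y' : ℝ, V1 k l a b y y' := hV1j.integral_prod_left
  have hsub : (∫ y : ℝ, ∫ y' : ℝ, V2 k l a b y y') - (∫ y : ℝ, ∫ y' : ℝ, V1 k l a b y y')
      = ∫ y : ℝ, ∫ y' : ℝ, E k a y * E l b y' := by
    rw [← integral_sub i2 i1]
    refine integral_congr_ae (Eventually.of_forall fun y => ?_)
    show (∫ y' : ℝ, V2 k l a b y y') - (∫ y' : ℝ, V1 k l a b y y')
        = ∫ y' : ℝ, E k a y * E l b y'
    rw [← integral_sub (intV2_snd hk hl hab y) (intV1_snd hk hl hab y)]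
    exact integral_congr_ae (Eventually.of_forall fun y' => hpt hab y y')
  calc ((k:ℂ) + l) * (∫ y : ℝ, ∫ y' : ℝ, F k l a b y y')
      = (k:ℂ) * (∫ y : ℝ, ∫ y' : ℝ, F k l a b y y')
        + (l:ℂ) * (∫ y : ℝ, ∫ y' : ℝ, F k l a b y y') := by ring
    _ = ∫ y : ℝ, ∫ y' : ℝ, E k a y * E l b y' := by
        rw [hk1, hl1, ← hsub]; ring

lemma part2 (hk : 1 ≤ k) (hl : 1 ≤ l) :
    ∫ y : ℝ, ∫ y' : ℝ, E k a y * E l b y'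
      = ((Real.sqrt (2*π/k) : ℝ) : ℂ) * ((Real.sqrt (2*π/l) : ℝ) : ℂ) := by
  calc ∫ y : ℝ, ∫ y' : ℝ, E k a y * E l b y'
      = ∫ y : ℝ, E k a y * ((Real.sqrt (2*π/l) : ℝ) : ℂ) :=
        integral_congr_ae (Eventually.of_forall fun y => by
          show (∫ y' : ℝ, E k a y * E l b y') = E k a y * ((Real.sqrt (2*π/l) : ℝ) : ℂ)
          rw [MeasureTheory.integral_const_mul, gaussE l hl b])
    _ = (∫ y : ℝ, E k a y) * ((Real.sqrt (2*π/l) : ℝ) : ℂ) := MeasureTheory.integral_mul_const _ _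
    _ = _ := by rw [gaussE k hk a]

lemma final_arith (hk : 1 ≤ k) (hl : 1 ≤ l) :
    ((2 * (π:ℂ) * Complex.I)⁻¹)^2 * (Complex.I * Complex.I *
      (((Real.sqrt (2*π/(k:ℝ)) : ℝ):ℂ) * ((Real.sqrt (2*π/(l:ℝ)) : ℝ):ℂ)))
    = ((2 * π * Real.sqrt ((k:ℝ) * (l:ℝ)) : ℝ) : ℂ)⁻¹ := by
  have hk' : (0:ℝ) < k := by exact_mod_cast hk
  have hl' : (0:ℝ) < l := by exact_mod_cast hl
  have hπ := Real.pi_pos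
  have hskl : (0:ℝ) < Real.sqrt ((k:ℝ) * l) := Real.sqrt_pos.mpr (by positivity)
  have hs : Real.sqrt (2*π/(k:ℝ)) * Real.sqrt (2*π/(l:ℝ)) = 2*π / Real.sqrt ((k:ℝ)*l) := by
    rw [← Real.sqrt_mul (by positivity)]
    rw [show (2*π/(k:ℝ)) * (2*π/(l:ℝ)) = (2*π)^2 / ((k:ℝ)*l) by field_simp]
    rw [Real.sqrt_div (by positivity), Real.sqrt_sq (by positivity)]
  rw [← Complex.ofReal_mul, hs]
  have hsq : ((2*(π:ℂ)*Complex.I)⁻¹)^2 = (-((((2*π)^2 : ℝ)):ℂ))⁻¹ := by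
    rw [inv_pow]
    congr 1
    push_cast
    linear_combination (4*(π:ℂ)^2) * Complex.I_sq
  rw [hsq, Complex.I_mul_I, inv_neg]
  have hreal : (((2*π)^2 : ℝ))⁻¹ * (2*π/Real.sqrt ((k:ℝ)*l))
      = (2*π*Real.sqrt ((k:ℝ)*l))⁻¹ := by
    field_simp
  calc -(((((2*π)^2 : ℝ)):ℂ))⁻¹ * (-1 * ((2*π/Real.sqrt ((k:ℝ)*l) : ℝ) : ℂ))
      = ((((2*π)^2 : ℝ) : ℂ))⁻¹ * ((2*π/Real.sqrt ((k:ℝ)*l) : ℝ) : ℂ) := by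
        ring
    _ = (((((2*π)^2 : ℝ))⁻¹ * (2*π/Real.sqrt ((k:ℝ)*l)) : ℝ) : ℂ) := by
        push_cast
        ring
    _ = _ := by rw [hreal, Complex.ofReal_inv]

end Main

end DCI




/-- Double contour-integral identity: for vertical lines `Re(η) = a < Re(ζ) = b`,
`(k+l)/(2πi)² ∬ ηζ log(ζ-η) e^{(kη²+lζ²)/2} = (1/(2πi))² ∬ e^{(kη²+lζ²)/2} = 1/(2π√(kl))`. -/
theorem double_contour_identity (k l : ℕ) (hk : 1 ≤ k) (hl : 1 ≤ l)
    (a b : ℝ) (hab : a < b) :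
    ((k : ℂ) + l) * (((2 * Real.pi * Complex.I)⁻¹) ^ 2 *
        (Complex.I * Complex.I * ∫ y : ℝ, ∫ y' : ℝ,
          ((a : ℂ) + Complex.I * y) * ((b : ℂ) + Complex.I * y') *
          Complex.log (((b : ℂ) + Complex.I * y') - ((a : ℂ) + Complex.I * y)) *
          Complex.exp (((k : ℂ) * ((a : ℂ) + Complex.I * y) ^ 2 +
            (l : ℂ) * ((b : ℂ) + Complex.I * y') ^ 2) / 2)))
      = ((2 * Real.pi * Complex.I)⁻¹) ^ 2 *
        (Complex.I * Complex.I * ∫ y : ℝ, ∫ y' : ℝ,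
          Complex.exp (((k : ℂ) * ((a : ℂ) + Complex.I * y) ^ 2 +
            (l : ℂ) * ((b : ℂ) + Complex.I * y') ^ 2) / 2)) ∧
    ((2 * Real.pi * Complex.I)⁻¹) ^ 2 *
        (Complex.I * Complex.I * ∫ y : ℝ, ∫ y' : ℝ,
          Complex.exp (((k : ℂ) * ((a : ℂ) + Complex.I * y) ^ 2 +
            (l : ℂ) * ((b : ℂ) + Complex.I * y') ^ 2) / 2))
      = ((2 * Real.pi * Real.sqrt ((k : ℝ) * l) : ℝ) : ℂ)⁻¹ := by
  have hexp : ∀ y y' : ℝ, Complex.exp (((k : ℂ) * ((a : ℂ) + Complex.I * y) ^ 2 +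
      (l : ℂ) * ((b : ℂ) + Complex.I * y') ^ 2) / 2) = DCI.E k a y * DCI.E l b y' := by
    intro y y'
    rw [DCI.E, DCI.E, ← Complex.exp_add]
    congr 1
    ring
  simp only [hexp]
  constructor
  · show ((k : ℂ) + l) * (((2 * Real.pi * Complex.I)⁻¹) ^ 2 *
        (Complex.I * Complex.I * ∫ y : ℝ, ∫ y' : ℝ, DCI.F k l a b y y'))
      = ((2 * Real.pi * Complex.I)⁻¹) ^ 2 *
        (Complex.I * Complex.I * ∫ y : ℝ, ∫ y' : ℝ, DCI.E k a y * DCI.E l b y')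
    rw [← DCI.part1 hk hl hab]
    ring
  · show ((2 * Real.pi * Complex.I)⁻¹) ^ 2 *
        (Complex.I * Complex.I * ∫ y : ℝ, ∫ y' : ℝ, DCI.E k a y * DCI.E l b y')
      = ((2 * Real.pi * Real.sqrt ((k : ℝ) * l) : ℝ) : ℂ)⁻¹
    rw [DCI.part2 hk hl]
    exact DCI.final_arith hk hl
end

section
/- For every complex $z$ with $|z| < 1$: $\frac{1}{2\pi i}\int_{\Re(\xi)=0} \xi^2\, \frac{z}{e^{-\xi^2/2} - z}\, d\xi = -\frac{1}{\sqrt{2\pi}}\,\mathrm{Li}_{3/2}(z)$, where the vertical line $\Re(\xi) = 0$ is oriented from $-i\infty$ to $+i\infty$ and $\mathrm{Li}_{3/2}(z) = \sum_{k \ge 1} z^k/k^{3/2}$. -/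
open MeasureTheory Real Filter

lemma gauss_moment {b : ℝ} (hb : 0 < b) :
    ∫ x : ℝ, x ^ 2 * Real.exp (-b * x ^ 2) = Real.sqrt (π / b) / (2 * b) := by
  have hint2 : Integrable fun x : ℝ => x ^ 2 * Real.exp (-b * x ^ 2) := by
    have := integrable_rpow_mul_exp_neg_mul_sq hb (s := ((2:ℕ):ℝ)) (by norm_num)
    simpa [Real.rpow_natCast] using this
  have hint0 : Integrable fun x : ℝ => Real.exp (-b * x ^ 2) := integrable_exp_neg_mul_sq hb
  set f : ℝ → ℝ := fun x => -(2 * b)⁻¹ * (x * Real.exp (-b * x ^ 2)) with hf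
  have hderiv : ∀ x : ℝ, HasDerivAt f
      (x ^ 2 * Real.exp (-b * x ^ 2) - (2 * b)⁻¹ * Real.exp (-b * x ^ 2)) x := by
    intro x
    have h1 : HasDerivAt (fun x : ℝ => Real.exp (-b * x ^ 2))
        (Real.exp (-b * x ^ 2) * (-b * (2 * x))) x := by
      have := ((hasDerivAt_pow 2 x).const_mul (-b)).exp
      simpa [mul_comm, pow_one] using this
    have h2 := ((hasDerivAt_id x).mul h1).const_mul (-(2 * b)⁻¹)
    refine h2.congr_deriv ?_
    simp only [id]
    have hbinv : (2 * b)⁻¹ * (2 * b) = 1 := inv_mul_cancel₀ (by positivity)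
    linear_combination (x ^ 2 * Real.exp (-b * x ^ 2)) * hbinv
  have h0 : Tendsto (fun x : ℝ => x * Real.exp (-b * x ^ 2)) (cocompact ℝ) (nhds 0) := by
    rw [tendsto_zero_iff_norm_tendsto_zero]
    have := tendsto_rpow_abs_mul_exp_neg_mul_sq_cocompact hb 1
    refine this.congr fun x => ?_
    simp [Real.norm_eq_abs, abs_mul, abs_of_nonneg (Real.exp_pos _).le]
  have h0' : Tendsto f (cocompact ℝ) (nhds 0) := by
    have := h0.const_mul (-(2 * b)⁻¹)
    simpa [hf] using this
  have hbot : Tendsto f atBot (nhds 0) :=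
    h0'.mono_left (by rw [cocompact_eq_atBot_atTop]; exact le_sup_left)
  have htop : Tendsto f atTop (nhds 0) :=
    h0'.mono_left (by rw [cocompact_eq_atBot_atTop]; exact le_sup_right)
  have key := integral_of_hasDerivAt_of_tendsto hderiv
    (hint2.sub (hint0.const_mul _)) hbot htop
  rw [sub_zero] at key
  have := integral_sub hint2 (hint0.const_mul ((2 * b)⁻¹))
  rw [key] at this
  have h3 : ∫ x : ℝ, (2 * b)⁻¹ * Real.exp (-b * x ^ 2) = (2 * b)⁻¹ * Real.sqrt (π / b) := by
    rw [MeasureTheory.integral_const_mul, integral_gaussian]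
  have h4 : (∫ x : ℝ, x ^ 2 * Real.exp (-b * x ^ 2)) = (2 * b)⁻¹ * Real.sqrt (π / b) := by
    linarith [this.symm, h3]
  rw [h4]; field_simp

lemma gauss_moment' (n : ℕ) :
    ∫ x : ℝ, x ^ 2 * Real.exp (-(((n:ℝ)+1)/2) * x ^ 2)
      = Real.sqrt (2 * π) / ((n:ℝ)+1) ^ ((3:ℝ)/2) := by
  have ha : (0:ℝ) < (n:ℝ) + 1 := by positivity
  rw [gauss_moment (by positivity)]
  have h1 : π / (((n:ℝ)+1)/2) = (2*π)/((n:ℝ)+1) := by field_simp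
  rw [h1, Real.sqrt_div (by positivity) _]
  rw [show ((3:ℝ)/2) = 1/2 + 1 by norm_num, Real.rpow_add ha, Real.rpow_one,
    ← Real.sqrt_eq_rpow]
  rw [show 2 * (((n:ℝ)+1)/2) = (n:ℝ)+1 by ring]
  rw [div_div]

/-- `(1/(2πi)) ∫_{Re(ξ)=0} ξ² z/(e^{-ξ²/2} - z) dξ = -(1/√(2π)) Li_{3/2}(z)` for `|z| < 1`. -/
theorem contour_Li_three_halves (z : ℂ) (hz : ‖z‖ < 1) :
    (2 * Real.pi * Complex.I)⁻¹ *
      (Complex.I * ∫ y : ℝ, (Complex.I * y) ^ 2 *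
        (z / (Complex.exp (-(Complex.I * y) ^ 2 / 2) - z)))
    = -(Real.sqrt (2 * Real.pi) : ℂ)⁻¹ *
        ∑' n : ℕ, z ^ (n + 1) / ((((n : ℝ) + 1) ^ ((3 : ℝ) / 2) : ℝ) : ℂ) := by
  have hz' : ‖z‖ < 1 := hz
  set F : ℕ → ℝ → ℂ := fun n y =>
    (Complex.I * y) ^ 2 * (z ^ (n+1) * Complex.exp (-(((n:ℕ):ℂ)+1) * (y:ℂ)^2/2)) with hF
  have hFeq : ∀ n y, F n y
      = (-(z^(n+1))) * ((y^2 * Real.exp (-(((n:ℝ)+1)/2) * y^2) : ℝ) : ℂ) := by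
    intro n y
    have hIsq : (Complex.I * (y:ℂ))^2 = -((y:ℂ)^2) := by
      rw [mul_pow, Complex.I_sq]; ring
    have harg : (-(((n:ℕ):ℂ)+1) * (y:ℂ)^2/2) = ((-(((n:ℝ)+1)/2) * y^2 : ℝ) : ℂ) := by
      push_cast; ring
    rw [hF]
    simp only [hIsq, harg, ← Complex.ofReal_exp]
    push_cast
    ring
  have hRint : ∀ n : ℕ, Integrable fun y : ℝ => y^2 * Real.exp (-(((n:ℝ)+1)/2) * y^2) := by
    intro n
    have := integrable_rpow_mul_exp_neg_mul_sq (b := ((n:ℝ)+1)/2) (by positivity)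
      (s := ((2:ℕ):ℝ)) (by norm_num)
    simpa [Real.rpow_natCast] using this
  have hFint : ∀ n : ℕ, Integrable (F n) := by
    intro n
    have : F n = fun y => (-(z^(n+1))) *
        ((y^2 * Real.exp (-(((n:ℝ)+1)/2) * y^2) : ℝ) : ℂ) := funext (hFeq n)
    rw [this]
    exact ((hRint n).ofReal).const_mul _
  have hnorm : ∀ n y, ‖F n y‖
      = ‖z‖^(n+1) * (y^2 * Real.exp (-(((n:ℝ)+1)/2) * y^2)) := by
    intro n y
    rw [hFeq, norm_mul, norm_neg, norm_pow, Complex.norm_real,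
      Real.norm_of_nonneg (by positivity)]
  have hnorm_int : ∀ n : ℕ, ∫ y : ℝ, ‖F n y‖
      = ‖z‖^(n+1) * (Real.sqrt (2*π) / ((n:ℝ)+1) ^ ((3:ℝ)/2)) := by
    intro n
    simp_rw [hnorm n]
    rw [MeasureTheory.integral_const_mul, gauss_moment' n]
  have hsum : Summable fun n : ℕ => ∫ y : ℝ, ‖F n y‖ := by
    have hgeom : Summable fun n : ℕ => ‖z‖^(n+1) :=
      ((summable_geometric_of_lt_one (norm_nonneg z) hz').mul_left ‖z‖).congr
        fun n => (pow_succ' ‖z‖ n).symm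
    refine Summable.of_nonneg_of_le (fun n => ?_) (fun n => ?_)
      (hgeom.mul_right (Real.sqrt (2*π)))
    · rw [hnorm_int n]; positivity
    · rw [hnorm_int n]
      refine mul_le_mul_of_nonneg_left ?_ (by positivity)
      refine div_le_self (Real.sqrt_nonneg _) ?_
      refine Real.one_le_rpow (by simp) (by norm_num)
  have hpt : ∀ y : ℝ, HasSum (fun n => F n y)
      ((Complex.I * y) ^ 2 * (z / (Complex.exp (-(Complex.I * y) ^ 2 / 2) - z))) := by
    intro y
    have harg : -(Complex.I * (y:ℂ))^2/2 = ((y^2/2 : ℝ):ℂ) := by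
      rw [mul_pow, Complex.I_sq]; push_cast; ring
    set w : ℂ := Complex.exp (((y^2/2 : ℝ):ℂ)) with hw
    have hw1 : 1 ≤ ‖w‖ := by
      rw [hw, Complex.norm_exp, Complex.ofReal_re]
      exact Real.one_le_exp (by positivity)
    have hw0 : w ≠ 0 := Complex.exp_ne_zero _
    have hr : ‖z / w‖ < 1 := by
      rw [norm_div]
      exact lt_of_le_of_lt (div_le_self (norm_nonneg z) hw1) hz'
    have hwz : w - z ≠ 0 := by
      refine sub_ne_zero.mpr fun h => ?_
      rw [← h] at hz'
      exact absurd hz' (not_lt.mpr hw1)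
    have hgeo := (hasSum_geometric_of_norm_lt_one hr).mul_left (z/w)
    have hterm : (fun n : ℕ => (z/w) * (z/w)^n)
        = fun n : ℕ => z^(n+1) * Complex.exp (-(((n:ℕ):ℂ)+1) * (y:ℂ)^2/2) := by
      funext n
      have h5 : Complex.exp (-(((n:ℕ):ℂ)+1) * (y:ℂ)^2/2)
          = (w⁻¹)^(n+1) := by
        rw [hw, ← Complex.exp_neg, ← Complex.exp_nat_mul]
        congr 1
        push_cast
        ring
      rw [← pow_succ', h5, div_eq_mul_inv, mul_pow]
    have hval : (z/w) * (1 - z/w)⁻¹ = z / (w - z) := by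
      field_simp
    rw [hterm, hval] at hgeo
    have := hgeo.mul_left ((Complex.I * (y:ℂ))^2)
    rw [harg]
    exact this
  have hswap : (∫ y : ℝ, (Complex.I * y) ^ 2 *
        (z / (Complex.exp (-(Complex.I * y) ^ 2 / 2) - z)))
      = ∑' n : ℕ, ∫ y : ℝ, F n y := by
    rw [MeasureTheory.integral_tsum_of_summable_integral_norm hFint hsum]
    congr 1
    funext y
    exact (hpt y).tsum_eq.symm
  have hInt : ∀ n : ℕ, ∫ y : ℝ, F n y
      = -(z^(n+1)) * ((Real.sqrt (2*π) / ((n:ℝ)+1) ^ ((3:ℝ)/2) : ℝ) : ℂ) := by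
    intro n
    have : (fun y : ℝ => F n y) = fun y => (-(z^(n+1))) *
        ((y^2 * Real.exp (-(((n:ℝ)+1)/2) * y^2) : ℝ) : ℂ) := funext (hFeq n)
    rw [this, MeasureTheory.integral_const_mul,
      show (∫ a : ℝ, ((a^2 * Real.exp (-(((n:ℝ)+1)/2) * a^2) : ℝ) : ℂ))
          = ((∫ a : ℝ, a^2 * Real.exp (-(((n:ℝ)+1)/2) * a^2) : ℝ) : ℂ) from integral_ofReal,
      gauss_moment' n]
  have hts : ∑' n : ℕ, ∫ y : ℝ, F n y
      = (-(Real.sqrt (2*π) : ℂ)) *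
        ∑' n : ℕ, z ^ (n + 1) / ((((n : ℝ) + 1) ^ ((3 : ℝ) / 2) : ℝ) : ℂ) := by
    rw [← tsum_mul_left]
    congr 1
    funext n
    rw [hInt n, Complex.ofReal_div]
    ring
  rw [hswap, hts]
  set T : ℂ := ∑' n : ℕ, z ^ (n + 1) / ((((n : ℝ) + 1) ^ ((3 : ℝ) / 2) : ℝ) : ℂ)
  have hs : (Real.sqrt (2*π) : ℂ) * (Real.sqrt (2*π) : ℂ) = 2*(π:ℂ) := by
    rw [← Complex.ofReal_mul, Real.mul_self_sqrt (by positivity)]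
    push_cast
    ring
  have hs0 : (Real.sqrt (2*π) : ℂ) ≠ 0 :=
    Complex.ofReal_ne_zero.mpr (by positivity)
  have hπ : (π:ℂ) ≠ 0 := Complex.ofReal_ne_zero.mpr Real.pi_ne_zero
  rw [← hs]
  have hI := Complex.I_ne_zero
  generalize (Real.sqrt (2*π):ℂ) = s at hs0 ⊢
  field_simp
end

section
/- Define $\mathfrak{h}_{\mathrm{right}}(0, z) = -\frac{1}{\sqrt{2\pi}}\int_{-\infty}^{0} \mathrm{Li}_{1/2}\big(z\, e^{-y^2/2}\big)\, dy$ for $|z| < 1$. Then $\mathfrak{h}_{\mathrm{right}}(0, z) = \frac{1}{2}\log(1 - z)$, where $\log$ is the principal branch. -/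
set_option maxHeartbeats 800000

open MeasureTheory Set Real

lemma integral_ofReal'' {X : Type*} [MeasurableSpace X] {μ : MeasureTheory.Measure X}
    {f : X → ℝ} : ∫ x, ((f x : ℂ)) ∂μ = ((∫ x, f x ∂μ : ℝ) : ℂ) :=
  integral_ofReal

lemma gauss_half (n : ℕ) :
    ∫ y in Set.Iic (0 : ℝ), Real.exp (-(((n : ℝ) + 1) / 2) * y ^ 2)
      = Real.sqrt (Real.pi / (((n : ℝ) + 1) / 2)) / 2 := by
  have h := integral_comp_neg_Iic (0 : ℝ)
      (fun x => Real.exp (-(((n : ℝ) + 1) / 2) * x ^ 2))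
  simp only [neg_neg, neg_zero, neg_pow, even_two.neg_pow] at h
  rw [h, integral_gaussian_Ioi]

/-- `𝔥_right(0,z) = -(1/√(2π)) ∫_{-∞}^0 Li_{1/2}(z e^{-y²/2}) dy = (1/2) log(1-z)`. -/
theorem h_right_at_zero (z : ℂ) (hz : ‖z‖ < 1) :
    -(Real.sqrt (2 * Real.pi) : ℂ)⁻¹ *
      ∫ y in Set.Iic (0 : ℝ),
        ∑' n : ℕ, (z * (Real.exp (-y ^ 2 / 2) : ℂ)) ^ (n + 1) /
          ((((n : ℝ) + 1) ^ ((1 : ℝ) / 2) : ℝ) : ℂ)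
    = (1 / 2) * Complex.log (1 - z) := by
  have hfun : ∀ (n : ℕ) (y : ℝ),
      (z * (Real.exp (-y ^ 2 / 2) : ℂ)) ^ (n + 1) /
          ((((n : ℝ) + 1) ^ ((1 : ℝ) / 2) : ℝ) : ℂ)
        = z ^ (n + 1) / (Real.sqrt ((n : ℝ) + 1) : ℂ) *
            ((Real.exp (-(((n : ℝ) + 1) / 2) * y ^ 2) : ℝ) : ℂ) := by
    intro n y
    rw [← Real.sqrt_eq_rpow, mul_pow]
    have : (((Real.exp (-y ^ 2 / 2)) : ℂ)) ^ (n + 1)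
        = ((Real.exp (-(((n : ℝ) + 1) / 2) * y ^ 2) : ℝ) : ℂ) := by
      rw [← Complex.ofReal_pow, ← Real.exp_nat_mul]
      push_cast
      ring_nf
    rw [this]; ring
  have hn1 : ∀ n : ℕ, (0 : ℝ) < (n : ℝ) + 1 := fun n => by positivity
  have hsqrt_pos : ∀ n : ℕ, (0 : ℝ) < Real.sqrt ((n : ℝ) + 1) :=
    fun n => Real.sqrt_pos.2 (hn1 n)
  set F : ℕ → ℝ → ℂ := fun n y =>
    z ^ (n + 1) / (Real.sqrt ((n : ℝ) + 1) : ℂ) *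
      ((Real.exp (-(((n : ℝ) + 1) / 2) * y ^ 2) : ℝ) : ℂ) with hF
  have hInt : ∀ n : ℕ, Integrable (F n) (volume.restrict (Set.Iic (0 : ℝ))) := by
    intro n
    exact ((integrable_exp_neg_mul_sq (by positivity : (0:ℝ) < ((n:ℝ)+1)/2)).ofReal.restrict
      ).const_mul _
  have hIntval : ∀ n : ℕ,
      ∫ y in Set.Iic (0 : ℝ), F n y
        = z ^ (n + 1) / (Real.sqrt ((n : ℝ) + 1) : ℂ)
            * ((Real.sqrt (Real.pi / (((n : ℝ) + 1) / 2)) / 2 : ℝ) : ℂ) := by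
    intro n
    rw [hF]
    simp only
    rw [integral_const_mul, integral_ofReal'', gauss_half n]
  have hnorm : ∀ n : ℕ, ∫ y in Set.Iic (0 : ℝ), ‖F n y‖
      = ‖z‖ ^ (n + 1) / Real.sqrt ((n : ℝ) + 1)
          * (Real.sqrt (Real.pi / (((n : ℝ) + 1) / 2)) / 2) := by
    intro n
    have : ∀ y : ℝ, ‖F n y‖ = ‖z‖ ^ (n + 1) / Real.sqrt ((n : ℝ) + 1)
        * Real.exp (-(((n : ℝ) + 1) / 2) * y ^ 2) := by
      intro y
      simp [hF, norm_div, norm_mul, Complex.norm_real, Real.norm_eq_abs,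
        abs_of_nonneg (Real.sqrt_nonneg _), abs_of_nonneg (Real.exp_pos _).le,
        map_pow, -Complex.ofReal_exp]
    simp_rw [this]
    rw [MeasureTheory.integral_const_mul, gauss_half n]
  have hsum : Summable fun n : ℕ => ∫ y in Set.Iic (0 : ℝ), ‖F n y‖ := by
    have hgeo : Summable (fun n : ℕ => Real.sqrt (2 * Real.pi) * ‖z‖ ^ (n + 1)) := by
      have := (summable_geometric_of_lt_one (by positivity : (0:ℝ) ≤ ‖z‖) hz).mul_left
        (Real.sqrt (2 * Real.pi) * ‖z‖)
      refine this.congr fun n => ?_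
      rw [pow_succ]; ring
    refine Summable.of_nonneg_of_le
      (fun n => integral_nonneg fun y => norm_nonneg _) (fun n => ?_) hgeo
    rw [hnorm n]
    have h1 : Real.sqrt (Real.pi / (((n : ℝ) + 1) / 2)) ≤ Real.sqrt (2 * Real.pi) := by
      apply Real.sqrt_le_sqrt
      rw [div_div_eq_mul_div, div_le_iff₀ (hn1 n)]
      nlinarith [Real.pi_pos, hn1 n]
    have h2 : (1 : ℝ) ≤ Real.sqrt ((n : ℝ) + 1) := Real.one_le_sqrt.2 (by linarith [hn1 n])
    have hz1 : (0:ℝ) ≤ ‖z‖ ^ (n + 1) := by positivity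
    calc ‖z‖ ^ (n + 1) / Real.sqrt ((n : ℝ) + 1)
          * (Real.sqrt (Real.pi / (((n : ℝ) + 1) / 2)) / 2)
        ≤ ‖z‖ ^ (n + 1) / 1 * (Real.sqrt (2 * Real.pi) / 1) := by
          gcongr <;> linarith [hsqrt_pos n]
      _ = Real.sqrt (2 * Real.pi) * ‖z‖ ^ (n + 1) := by ring
  -- swap sum and integral
  have hswap : (∫ y in Set.Iic (0 : ℝ),
        ∑' n : ℕ, (z * (Real.exp (-y ^ 2 / 2) : ℂ)) ^ (n + 1) /
          ((((n : ℝ) + 1) ^ ((1 : ℝ) / 2) : ℝ) : ℂ))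
      = ∑' n : ℕ, ∫ y in Set.Iic (0 : ℝ), F n y := by
    rw [integral_tsum_of_summable_integral_norm hInt hsum]
    congr 1
    funext y
    exact tsum_congr fun n => hfun n y
  rw [hswap]
  -- compute each term
  have hterm : ∀ n : ℕ, (∫ y in Set.Iic (0 : ℝ), F n y)
      = ((Real.sqrt (2 * Real.pi) / 2 : ℝ) : ℂ) * (z ^ (n + 1) / ((n : ℂ) + 1)) := by
    intro n
    rw [hIntval n]
    have e1 : Real.pi / (((n : ℝ) + 1) / 2) = 2 * Real.pi / ((n : ℝ) + 1) := by
      field_simp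
    have h1 : Real.sqrt (Real.pi / (((n : ℝ) + 1) / 2))
        = Real.sqrt (2 * Real.pi) / Real.sqrt ((n : ℝ) + 1) := by
      rw [e1, Real.sqrt_div (by positivity) _]
    rw [h1]
    have hs : ((Real.sqrt ((n : ℝ) + 1) : ℝ) : ℂ) * ((Real.sqrt ((n : ℝ) + 1) : ℝ) : ℂ)
        = (n : ℂ) + 1 := by
      rw [← Complex.ofReal_mul, Real.mul_self_sqrt (hn1 n).le]
      push_cast; ring
    have hsne : ((Real.sqrt ((n : ℝ) + 1) : ℝ) : ℂ) ≠ 0 := by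
      exact_mod_cast (hsqrt_pos n).ne'
    have hne : ((n : ℂ) + 1) ≠ 0 := by
      have := Nat.cast_add_one_ne_zero (R := ℂ) n
      push_cast at this ⊢; exact this
    rw [Complex.ofReal_div, Complex.ofReal_div, Complex.ofReal_div]
    rw [← hs]
    field_simp
  have hlog : HasSum (fun n : ℕ => z ^ (n + 1) / ((n : ℂ) + 1)) (-Complex.log (1 - z)) := by
    have h := Complex.hasSum_taylorSeries_neg_log (z := z) (by exact hz)
    have h' : HasSum (fun n : ℕ => z ^ (n + 1) / ((n + 1 : ℕ) : ℂ)) (-Complex.log (1 - z)) := by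
      refine (hasSum_nat_add_iff (f := fun n : ℕ => z ^ n / (n : ℂ)) 1).2 ?_
      simpa using h
    refine h'.congr_fun fun n => by push_cast; ring_nf
  calc -(Real.sqrt (2 * Real.pi) : ℂ)⁻¹ * ∑' n : ℕ, ∫ y in Set.Iic (0 : ℝ), F n y
      = -(Real.sqrt (2 * Real.pi) : ℂ)⁻¹ *
          (((Real.sqrt (2 * Real.pi) / 2 : ℝ) : ℂ) * ∑' n : ℕ, z ^ (n + 1) / ((n : ℂ) + 1)) := by
        rw [tsum_congr hterm, tsum_mul_left]
    _ = -(Real.sqrt (2 * Real.pi) : ℂ)⁻¹ *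
          (((Real.sqrt (2 * Real.pi) / 2 : ℝ) : ℂ) * (-Complex.log (1 - z))) := by
        rw [hlog.tsum_eq]
    _ = (1 / 2) * Complex.log (1 - z) := by
        have hne : ((Real.sqrt (2 * Real.pi) : ℝ) : ℂ) ≠ 0 := by
          exact_mod_cast (Real.sqrt_pos.2 (by positivity : (0:ℝ) < 2 * Real.pi)).ne'
        rw [Complex.ofReal_div, Complex.ofReal_ofNat]
        have hrw : -(Real.sqrt (2 * Real.pi) : ℂ)⁻¹ *
            ((Real.sqrt (2 * Real.pi) : ℂ) / 2 * -Complex.log (1 - z))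
            = (Real.sqrt (2 * Real.pi) : ℂ)⁻¹ * (Real.sqrt (2 * Real.pi) : ℂ) *
                (Complex.log (1 - z) / 2) := by ring
        rw [hrw, inv_mul_cancel₀ hne]
        ring
end

section
/- For every complex number $u$ with $\arg(u) \in (3\pi/4, 5\pi/4)$: $\frac{1}{\sqrt{2\pi}}\int_{-\infty}^{u} e^{-\omega^2/2}\, d\omega = \frac{1}{2\pi i}\int_{\Re(\omega) = 0} \frac{e^{(-u^2 + \omega^2)/2}}{\omega - u}\, d\omega$, where the left integral is from $-\infty$ (along the real axis) to $u$ within the sector $\arg(\omega) \in (3\pi/4, 5\pi/4)$, and the right integral is over the imaginary axis oriented from $-i\infty$ to $+i\infty$. -/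
open MeasureTheory Set Complex Real intervalIntegral Filter Topology

lemma aux_exp_tendsto {r : ℝ} (hr : r < 0) :
    Tendsto (fun s : ℝ => Real.exp (r * s)) atTop (𝓝 0) :=
  by
  have h := (tendsto_const_mul_atTop_of_pos (by linarith : 0 < -r)).mpr (tendsto_id (α := ℝ))
  have := Real.tendsto_exp_neg_atTop_nhds_zero.comp h
  simpa only [Function.comp_def, neg_mul, neg_neg, id] using this

lemma aux_integral_cexp_Ioi {c : ℂ} (hc : 0 < c.re) :
    ∫ s in Ioi (0:ℝ), Complex.exp (-(c * s)) = c⁻¹ := by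
  have hc0 : c ≠ 0 := fun h => by simp [h] at hc
  have hderiv : ∀ s ∈ Ici (0:ℝ), HasDerivAt (fun s : ℝ => -c⁻¹ * Complex.exp (-(c * s)))
      (Complex.exp (-(c * s))) s := by
    intro s _
    have h1 : HasDerivAt (fun z : ℂ => -c⁻¹ * Complex.exp (-(c * z)))
        (-c⁻¹ * (Complex.exp (-(c * s)) * -(c * 1))) (s:ℂ) :=
      ((((hasDerivAt_id (s:ℂ)).const_mul c).neg).cexp).const_mul (-c⁻¹)
    have h2 := h1.comp_ofReal
    convert h2 using 1
    field_simp
  have hint : IntegrableOn (fun s : ℝ => Complex.exp (-(c * s))) (Ioi (0:ℝ)) := by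
    apply Integrable.mono' ((exp_neg_integrableOn_Ioi 0 hc))
    · exact (Complex.continuous_exp.comp
        ((continuous_const.mul Complex.continuous_ofReal).neg)).aestronglyMeasurable
    · filter_upwards with s
      rw [Complex.norm_exp]
      simp [mul_comm]
  have htend : Tendsto (fun s : ℝ => -c⁻¹ * Complex.exp (-(c * s))) atTop (𝓝 0) := by
    rw [tendsto_zero_iff_norm_tendsto_zero]
    have heq : (fun s : ℝ => ‖-c⁻¹ * Complex.exp (-(c * s))‖)
        = fun s : ℝ => ‖c⁻¹‖ * Real.exp (-c.re * s) := by
      funext s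
      rw [norm_mul, norm_neg, Complex.norm_exp]
      congr 2
      simp
    rw [heq, show (0:ℝ) = ‖c⁻¹‖ * 0 by ring]
    exact (aux_exp_tendsto (by linarith : -c.re < 0)).const_mul _
  have := integral_Ioi_of_hasDerivAt_of_tendsto'
    (f := fun s : ℝ => -c⁻¹ * Complex.exp (-(c * s))) hderiv hint htend
  rw [this]
  simp

lemma aux_Iic_eq_Ioi (f : ℝ → ℂ) (a : ℝ) :
    ∫ x in Iic a, f x = ∫ s in Ioi (0:ℝ), f (a - s) := by
  have e : MeasurableEmbedding (fun x : ℝ => x + a) :=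
    (Homeomorph.addRight a).isClosedEmbedding.measurableEmbedding
  have h1 := e.setIntegral_map (μ := volume) f (Iic a)
  rw [map_add_right_eq_self] at h1
  have h2 : (fun x : ℝ => x + a) ⁻¹' (Iic a) = Iic 0 := by ext x; simp
  rw [h2] at h1
  rw [h1]
  have h3 := integral_comp_neg_Iic (0:ℝ) (fun s => f (a - s))
  simp only [neg_zero] at h3
  rw [← h3]
  congr 1 with x
  congr 1
  ring

lemma aux_fubini (u : ℂ) (hre : u.re < 0) :
    ∫ y : ℝ, Complex.exp (-(y:ℂ)^2/2) / (Complex.I*y - u)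
      = (Real.sqrt (2*π) : ℂ) * ∫ s in Ioi (0:ℝ), Complex.exp (u*s - s^2/2) := by
  set f : ℝ → ℝ → ℂ := fun y s => Complex.exp (-(y:ℂ)^2/2 - (Complex.I*y - u)*s) with hf
  have hre' : ∀ y s : ℝ, (-(y:ℂ)^2/2 - (Complex.I*y - u)*s).re = -(y^2)/2 + u.re*s := by
    intro y s
    simp [Complex.sub_re, Complex.mul_re, Complex.mul_im, Complex.I_re, Complex.I_im,
      Complex.ofReal_re, Complex.ofReal_im, Complex.neg_re, Complex.div_re, pow_two,
      Complex.normSq]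
  -- integrability on the product
  have hint : Integrable (Function.uncurry f) (volume.prod (volume.restrict (Ioi (0:ℝ)))) := by
    have h2 : Integrable (fun s : ℝ => Real.exp (u.re * s)) (volume.restrict (Ioi (0:ℝ))) := by
      have := exp_neg_integrableOn_Ioi 0 (show (0:ℝ) < -u.re by linarith)
      simpa [neg_mul, neg_neg] using this.integrable
    have hbound := (integrable_exp_neg_mul_sq (show (0:ℝ) < 1/2 by norm_num)).mul_prod h2
    apply Integrable.mono' hbound
    · apply Continuous.aestronglyMeasurable
      fun_prop
    · filter_upwards with p
      simp only [Function.uncurry, hf]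
      rw [Complex.norm_exp, hre', ← Real.exp_add]
      apply le_of_eq
      congr 1
      ring
  -- step 1 : pointwise identity in y
  have h1 : ∀ y : ℝ, Complex.exp (-(y:ℂ)^2/2) / (Complex.I*y - u)
      = ∫ s in Ioi (0:ℝ), f y s := by
    intro y
    have hc : 0 < (Complex.I*y - u).re := by
      simp [Complex.sub_re, Complex.mul_re]
      linarith
    have : ∀ s : ℝ, f y s = Complex.exp (-(y:ℂ)^2/2) * Complex.exp (-((Complex.I*y - u) * s)) := by
      intro s
      rw [hf, ← Complex.exp_add]
      ring_nf
    simp_rw [this]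
    rw [MeasureTheory.integral_const_mul, aux_integral_cexp_Ioi hc, div_eq_mul_inv]
  simp_rw [h1]
  rw [MeasureTheory.integral_integral_swap hint]
  -- step 2 : inner Gaussian integral in y
  have h2 : ∀ s : ℝ, s ∈ Ioi (0:ℝ) → (∫ y : ℝ, f y s)
      = (Real.sqrt (2*π) : ℂ) * Complex.exp (u*s - s^2/2) := by
    intro s _
    have hexp : ∀ y : ℝ, f y s
        = Complex.exp ((-(1/2):ℂ) * y^2 + (-Complex.I*s) * y + u*s) := by
      intro y
      rw [hf]
      ring_nf
    simp_rw [hexp]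
    rw [integral_cexp_quadratic (by norm_num : (-(1/2):ℂ).re < 0)]
    congr 1
    · rw [show ((π:ℂ) / -(-(1/2))) = (((2*π : ℝ)):ℂ) by push_cast; ring,
        show ((1/2 : ℂ)) = (((1/2:ℝ)):ℂ) by norm_num,
        ← Complex.ofReal_cpow (by positivity), Real.rpow_def_of_pos (by positivity)]
      rw [Real.sqrt_eq_rpow, Real.rpow_def_of_pos (by positivity)]
    · congr 1
      have : (-Complex.I*(s:ℂ))^2 = -(s:ℂ)^2 := by
        rw [mul_pow, neg_sq, Complex.I_sq]; ring
      rw [this]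
      ring
  rw [MeasureTheory.setIntegral_congr_fun measurableSet_Ioi h2,
    MeasureTheory.integral_const_mul]

lemma aux_contour (a b : ℝ) :
    (∫ x in Iic a, Complex.exp (-(x:ℂ)^2/2))
      + Complex.I * (∫ y in (0:ℝ)..b, Complex.exp (-((a:ℂ) + y*Complex.I)^2/2))
    = ∫ x in Iic a, Complex.exp (-((x:ℂ) + b*Complex.I)^2/2) := by
  set f : ℂ → ℂ := fun z => Complex.exp (-z^2/2) with hfdef
  have hdiff : Differentiable ℂ f := (((differentiable_pow 2).neg).div_const 2).cexp
  have hform : ∀ z : ℂ, -z^2/2 = -(1/2:ℂ)*z^2 := fun z => by ring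
  -- the rectangle identity
  have hrect : ∀ R : ℝ,
      (∫ x in -R..a, f x) - (∫ x in -R..a, f (x + b*Complex.I))
        + Complex.I * (∫ y in (0:ℝ)..b, f (a + y*Complex.I))
        - Complex.I * (∫ y in (0:ℝ)..b, f (-R + y*Complex.I)) = 0 := by
    intro R
    have := Complex.integral_boundary_rect_eq_zero_of_differentiableOn f ((-R:ℝ):ℂ)
      ((a:ℂ) + (b:ℂ)*Complex.I) hdiff.differentiableOn
    simpa only [Complex.neg_re, Complex.neg_im, Complex.ofReal_re, Complex.ofReal_im,
      neg_zero, Complex.ofReal_zero, zero_mul, add_zero, Complex.ofReal_neg,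
      Complex.add_re, Complex.add_im, Complex.mul_re, Complex.mul_im, Complex.I_re,
      Complex.I_im, mul_zero, mul_one, zero_sub, sub_zero, zero_add, neg_neg,
      smul_eq_mul] using this
  -- limits
  have hintA : IntegrableOn (fun x : ℝ => f x) (Iic a) := by
    simp_rw [hfdef, hform]
    exact (integrable_cexp_neg_mul_sq (by norm_num : (0:ℝ) < (1/2:ℂ).re)).integrableOn
  have hintB : IntegrableOn (fun x : ℝ => f (x + b*Complex.I)) (Iic a) := by
    simp_rw [hfdef, hform]
    exact (GaussianFourier.integrable_cexp_neg_mul_sq_add_real_mul_I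
      (by norm_num : (0:ℝ) < (1/2:ℂ).re) b).integrableOn
  have hA : Tendsto (fun R : ℝ => ∫ x in -R..a, f x) atTop
      (𝓝 (∫ x in Iic a, f x)) :=
    intervalIntegral_tendsto_integral_Iic a hintA tendsto_neg_atTop_atBot
  have hB : Tendsto (fun R : ℝ => ∫ x in -R..a, f (x + b*Complex.I)) atTop
      (𝓝 (∫ x in Iic a, f (x + b*Complex.I))) :=
    intervalIntegral_tendsto_integral_Iic a hintB tendsto_neg_atTop_atBot
  have hC : Tendsto (fun R : ℝ => Complex.I * ∫ y in (0:ℝ)..b, f (-R + y*Complex.I))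
      atTop (𝓝 0) := by
    have hbnd : ∀ R : ℝ, ‖Complex.I * ∫ y in (0:ℝ)..b, f (-R + y*Complex.I)‖
        ≤ Real.exp ((b^2 - R^2)/2) * |b - 0| := by
      intro R
      rw [norm_mul, Complex.norm_I, one_mul]
      apply intervalIntegral.norm_integral_le_of_norm_le_const
      intro y hy
      have hy2 : y^2 ≤ b^2 := by
        have h1 : y ∈ Set.uIcc (0:ℝ) b := Set.uIoc_subset_uIcc hy
        rw [Set.mem_uIcc] at h1
        rcases h1 with ⟨h1, h2⟩ | ⟨h1, h2⟩ <;> nlinarith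
      rw [hfdef, Complex.norm_exp]
      have hre : (-(-(R:ℂ) + (y:ℝ)*Complex.I)^2/2).re = (y^2 - R^2)/2 := by
        simp [Complex.sub_re, Complex.mul_re, Complex.mul_im, Complex.I_re, Complex.I_im,
          Complex.ofReal_re, Complex.ofReal_im, Complex.neg_re, Complex.div_re, pow_two,
          Complex.normSq]
      rw [hre]
      apply Real.exp_le_exp.mpr
      linarith
    have h1 : Tendsto (fun R : ℝ => (b^2 - R^2)/2) atTop atBot := by
      have h2 : Tendsto (fun R : ℝ => -(R^2)) atTop atBot :=
        tendsto_neg_atBot_iff.mpr (tendsto_pow_atTop two_ne_zero)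
      have h3 := tendsto_atBot_add_const_left atTop (b^2) h2
      have h4 := h3.atBot_div_const (show (0:ℝ) < 2 by norm_num)
      simpa [sub_eq_add_neg] using h4
    have hg := (Real.tendsto_exp_atBot.comp h1).mul_const |b - 0|
    rw [zero_mul] at hg
    exact squeeze_zero_norm hbnd hg
  have key : ∀ R : ℝ, (∫ x in -R..a, f (x + b*Complex.I))
      = (∫ x in -R..a, f x)
        + Complex.I * (∫ y in (0:ℝ)..b, f (a + y*Complex.I))
        - Complex.I * (∫ y in (0:ℝ)..b, f (-R + y*Complex.I)) := by
    intro R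
    have := hrect R
    linear_combination -this
  have hB' : Tendsto (fun R : ℝ => ∫ x in -R..a, f (x + b*Complex.I)) atTop
      (𝓝 ((∫ x in Iic a, f x)
        + Complex.I * (∫ y in (0:ℝ)..b, f (a + y*Complex.I)) - 0)) := by
    simp_rw [key]
    exact Tendsto.sub (hA.add_const _) hC
  have := tendsto_nhds_unique hB hB'
  rw [this, sub_zero]

/-- For `u` in the sector `arg(u) ∈ (3π/4, 5π/4)`,
`(1/√(2π)) ∫_{-∞}^{u} e^{-ω²/2} dω = (1/(2πi)) ∫_{Re(ω)=0} e^{(-u²+ω²)/2}/(ω-u) dω`,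
where the left path is `(-∞, Re u] ∪ [Re u, u]`. -/
theorem gaussian_sector_identity (u : ℂ) (hu : 3 * Real.pi / 4 < |Complex.arg u|) :
    (Real.sqrt (2 * Real.pi) : ℂ)⁻¹ *
      ((∫ x in Set.Iic u.re, Complex.exp (-(x : ℂ) ^ 2 / 2)) +
        ∫ t in (0 : ℝ)..1, (u - (u.re : ℂ)) *
          Complex.exp (-((1 - (t : ℂ)) * (u.re : ℂ) + (t : ℂ) * u) ^ 2 / 2))
    = (2 * Real.pi * Complex.I)⁻¹ *
        (Complex.I * ∫ y : ℝ, Complex.exp ((-u ^ 2 + (Complex.I * y) ^ 2) / 2) /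
          (Complex.I * y - u)) := by
  have hπ := Real.pi_pos
  have hre : u.re < 0 := by
    by_contra h
    push_neg at h
    have h2 := Complex.abs_arg_le_pi_div_two_iff.mpr h
    linarith
  obtain ⟨a, b, rfl⟩ : ∃ a b : ℝ, u = (a:ℂ) + (b:ℂ)*Complex.I :=
    ⟨u.re, u.im, (Complex.re_add_im u).symm⟩
  simp only [Complex.add_re, Complex.ofReal_re, Complex.mul_re, Complex.I_re,
    Complex.ofReal_im, Complex.I_im, mul_zero, mul_one, zero_sub, sub_zero,
    zero_mul, add_zero, Complex.add_im, Complex.mul_im, zero_add, neg_zero] at hre ⊢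
  set u : ℂ := (a:ℂ) + (b:ℂ)*Complex.I with hu'
  -- rewrite the segment integral
  have hseg : (∫ t in (0:ℝ)..1, (u - (a : ℂ)) *
        Complex.exp (-((1 - (t : ℂ)) * (a : ℂ) + (t : ℂ) * u) ^ 2 / 2))
      = Complex.I * ∫ y in (0:ℝ)..b, Complex.exp (-((a:ℂ) + y*Complex.I)^2/2) := by
    have hpt : ∀ t : ℝ, (u - (a : ℂ)) *
          Complex.exp (-((1 - (t : ℂ)) * (a : ℂ) + (t : ℂ) * u) ^ 2 / 2)
        = Complex.I * ((b:ℝ) •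
            Complex.exp (-((a:ℂ) + ((b*t : ℝ):ℂ)*Complex.I)^2/2)) := by
      intro t
      have harg : -((1 - (t : ℂ)) * (a : ℂ) + (t : ℂ) * u) ^ 2 / 2
          = -((a:ℂ) + ((b*t : ℝ):ℂ)*Complex.I)^2/2 := by
        rw [hu']
        push_cast
        ring
      rw [harg, Complex.real_smul]
      have hsub : u - (a:ℂ) = (b:ℂ) * Complex.I := by rw [hu']; ring
      rw [hsub]
      ring
    simp_rw [hpt]
    rw [intervalIntegral.integral_const_mul, intervalIntegral.integral_smul]
    congr 1
    have := intervalIntegral.smul_integral_comp_mul_left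
      (fun y : ℝ => Complex.exp (-((a:ℂ) + (y:ℂ)*Complex.I)^2/2)) b (a := 0) (b := 1)
    simpa using this
  rw [hseg, aux_contour a b]
  -- rewrite the left integral by substitution
  rw [aux_Iic_eq_Ioi (fun x : ℝ => Complex.exp (-((x:ℂ) + b*Complex.I)^2/2)) a]
  have hleft : ∀ s : ℝ, Complex.exp (-(((a - s : ℝ):ℂ) + (b:ℂ)*Complex.I)^2/2)
      = Complex.exp (-(u - (s:ℂ))^2/2) := by
    intro s
    rw [hu']
    push_cast
    ring_nf
  simp_rw [hleft]
  -- rewrite the right-hand side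
  have hrhs : ∀ y : ℝ, Complex.exp ((-u ^ 2 + (Complex.I * y) ^ 2) / 2) /
        (Complex.I * y - u)
      = Complex.exp (-u^2/2) * (Complex.exp (-(y:ℂ)^2/2) / (Complex.I * y - u)) := by
    intro y
    rw [mul_div_assoc', ← Complex.exp_add]
    congr 2
    have : (Complex.I * (y:ℂ))^2 = -(y:ℂ)^2 := by
      rw [mul_pow, Complex.I_sq]; ring
    rw [this]
    ring
  simp_rw [hrhs]
  rw [MeasureTheory.integral_const_mul, aux_fubini u (by simpa [hu'] using hre)]
  -- combine exponentials
  have hcomb : ∀ s : ℝ, Complex.exp (-(u - (s:ℂ))^2/2)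
      = Complex.exp (-u^2/2) * Complex.exp (u*s - s^2/2) := by
    intro s
    rw [← Complex.exp_add]
    congr 1
    ring
  simp_rw [hcomb]
  rw [MeasureTheory.integral_const_mul]
  -- final scalar arithmetic
  set S : ℂ := ((Real.sqrt (2*π)):ℂ) with hS
  have hs2 : S * S = ((2*π:ℝ):ℂ) := by
    rw [hS, ← Complex.ofReal_mul, Real.mul_self_sqrt (by positivity)]
  have hsne : S ≠ 0 := by
    rw [hS]
    simp only [ne_eq, Complex.ofReal_eq_zero]
    positivity
  rw [show ((2:ℂ) * (π:ℝ) * Complex.I) = S * S * Complex.I by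
    rw [hs2]; push_cast; ring]
  set J := ∫ s in Ioi (0:ℝ), Complex.exp (u*s - s^2/2) with hJ
  set E := Complex.exp (-u^2/2) with hE
  field_simp
end

section
/- Let $0 < \rho < 1$, $c$ a real constant with $0 < c \le 1 - \rho$, and consider the level curve $\Gamma = \{u \in \mathbb{C} : |u|^\rho |u+1|^{1-\rho} = r\}$ for a constant $r > 0$. Writing $u = x + iy$ on $\Gamma$ (with $u \neq 0, -1$), the logarithmic derivative of $|u+1|^{-c} e^{\Re u}$ with respect to $x$ along $\Gamma$ equals $\frac{(x+\rho)^2 + \rho(1 - \rho - c) + y^2}{x^2 + 2\rho x + \rho + y^2}$; in particular, for $0 < c \le 1 - \rho$ the function $|u+1|^{-c} e^{\Re u}$ is nondecreasing in $\Re u$ along $\Gamma$. -/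
/-- Along the level curve `|u|^ρ |u+1|^{1-ρ} = r`, writing `u = x + iy`, the logarithmic
differential of `|u+1|^{-c} e^{Re u}` equals
`((x+ρ)² + ρ(1-ρ-c) + y²)/(x² + 2ρx + ρ + y²) dx`; for `0 < c ≤ 1-ρ` this ratio is
nonnegative, so the function is nondecreasing in `Re u` along the curve. -/
theorem level_curve_monotonicity (ρ c x y dx dy : ℝ)
    (hρ0 : 0 < ρ) (hρ1 : ρ < 1) (hc0 : 0 < c) (hc : c ≤ 1 - ρ)
    (h0 : (x, y) ≠ ((0 : ℝ), (0 : ℝ))) (h1 : (x, y) ≠ ((-1 : ℝ), (0 : ℝ)))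
    (hden : x ^ 2 + 2 * ρ * x + ρ + y ^ 2 ≠ 0)
    (hrel : (ρ * x / (x ^ 2 + y ^ 2) + (1 - ρ) * (x + 1) / ((x + 1) ^ 2 + y ^ 2)) * dx +
        (ρ * y / (x ^ 2 + y ^ 2) + (1 - ρ) * y / ((x + 1) ^ 2 + y ^ 2)) * dy = 0) :
    (1 - c * (x + 1) / ((x + 1) ^ 2 + y ^ 2)) * dx - c * y / ((x + 1) ^ 2 + y ^ 2) * dy
      = ((x + ρ) ^ 2 + ρ * (1 - ρ - c) + y ^ 2) / (x ^ 2 + 2 * ρ * x + ρ + y ^ 2) * dx ∧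
    0 ≤ ((x + ρ) ^ 2 + ρ * (1 - ρ - c) + y ^ 2) / (x ^ 2 + 2 * ρ * x + ρ + y ^ 2) := by
  have hA : x ^ 2 + y ^ 2 ≠ 0 := by
    intro h
    apply h0
    have hx : x = 0 := by nlinarith [sq_nonneg x, sq_nonneg y]
    have hy : y = 0 := by nlinarith [sq_nonneg x, sq_nonneg y]
    simp [hx, hy]
  have hB : (x + 1) ^ 2 + y ^ 2 ≠ 0 := by
    intro h
    apply h1
    have hx : x = -1 := by nlinarith [sq_nonneg (x + 1), sq_nonneg y]
    have hy : y = 0 := by nlinarith [sq_nonneg (x + 1), sq_nonneg y]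
    simp [hx, hy]
  have hDpos : 0 < x ^ 2 + 2 * ρ * x + ρ + y ^ 2 := by
    nlinarith [sq_nonneg (x + ρ), sq_nonneg y]
  constructor
  · field_simp [show x * (x + ρ * 2) + ρ + y ^ 2 ≠ 0 by convert hden using 1; ring] at hrel ⊢
    linear_combination -c * hrel
  · apply div_nonneg _ hDpos.le
    nlinarith [sq_nonneg (x + ρ), sq_nonneg y]
end
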